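/- arXiv:2104.04396 — 6 statements merged into one kernel-verified Lean document; each statement's English description precedes it below -/
import Mathlib

section
/- Let d ≥ 2 and let E ⊆ ℝ^d be a nonempty open connected set, and let (c,p) satisfy the standing assumption. Let v : E → ℝ be continuously differentiable, and let ξ : E → ℝ^d be continuous with compact support contained in E, such that the restriction of ξ to each cell E_τ is continuously differentiable and the product map x ↦ c(x)ξ(x)p(x) is locally Lipschitz on E (hence differentiable Lebesgue-a.e. by Rademacher's theorem). Then (1/2)∫_E (∇v(x))ᵀ c(x) ξ(x) p(x) dx = −(1/2)∫_E v(x) · div(cξp)(x) dx, where div(cξp)(x) = Σ_{i=1}^d ∂_i (Σ_j c_{ij} ξ_j p)(x) is the a.e.-defined divergence and both integrals are with respect to Lebesgue measure. -/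
open MeasureTheory
open Set Filter

lemma aux_mul_lipschitzOnWith {α : Type*} [PseudoMetricSpace α] {f g : α → ℝ} {s : Set α}
    {Kf Kg : NNReal} {Bf Bg : ℝ}
    (hf : LipschitzOnWith Kf f s) (hg : LipschitzOnWith Kg g s)
    (hBf : ∀ x ∈ s, |f x| ≤ Bf) (hBg : ∀ x ∈ s, |g x| ≤ Bg) :
    LipschitzOnWith (Real.toNNReal (Bf * Kg + Bg * Kf)) (fun x => f x * g x) s := by
  apply LipschitzOnWith.of_dist_le_mul
  intro x hx y hy
  have h1 := hf.dist_le_mul x hx y hy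
  have h2 := hg.dist_le_mul x hx y hy
  have hfx := hBf x hx
  have hgy := hBg y hy
  have hfx0 : (0:ℝ) ≤ |f x| := abs_nonneg _
  have hgy0 : (0:ℝ) ≤ |g y| := abs_nonneg _
  have hd : (0:ℝ) ≤ dist x y := dist_nonneg
  have key : |f x * g x - f y * g y| ≤ |f x| * |g x - g y| + |g y| * |f x - f y| := by
    have : f x * g x - f y * g y = f x * (g x - g y) + g y * (f x - f y) := by ring
    rw [this]
    calc |f x * (g x - g y) + g y * (f x - f y)|
        ≤ |f x * (g x - g y)| + |g y * (f x - f y)| := abs_add_le _ _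
      _ = |f x| * |g x - g y| + |g y| * |f x - f y| := by rw [abs_mul, abs_mul]
  have hcoe : Bf * Kg + Bg * Kf ≤ ((Real.toNNReal (Bf * Kg + Bg * Kf) : NNReal) : ℝ) := by
    rw [Real.coe_toNNReal']
    exact le_max_left _ _
  rw [Real.dist_eq] at h1 h2 ⊢
  have hgd : |g x - g y| ≤ Kg * dist x y := h2
  have hfd : |f x - f y| ≤ Kf * dist x y := h1
  nlinarith [abs_nonneg (g x - g y), abs_nonneg (f x - f y), mul_le_mul_of_nonneg_right hcoe hd]

lemma aux_glue {α : Type*} [PseudoMetricSpace α] {G : α → ℝ} {K : Set α} {r M : ℝ}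
    {L : NNReal} (hr : 0 < r) (hM : 0 ≤ M)
    (hGb : ∀ x, |G x| ≤ M) (hG0 : ∀ x, x ∉ K → G x = 0)
    (hloc : ∀ x ∈ K, LipschitzOnWith L G (Metric.ball x r)) :
    LipschitzWith (L + Real.toNNReal (2 * M / r)) G := by
  apply LipschitzWith.of_dist_le_mul
  intro x y
  have hC2 : (2 * M / r) ≤ ((L + Real.toNNReal (2 * M / r) : NNReal) : ℝ) := by
    push_cast
    rw [Real.coe_toNNReal']
    have : 2 * M / r ≤ max (2 * M / r) 0 := le_max_left _ _
    have hL0 : (0:ℝ) ≤ (L : ℝ) := L.coe_nonneg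
    linarith
  have hCL : (L : ℝ) ≤ ((L + Real.toNNReal (2 * M / r) : NNReal) : ℝ) := by
    push_cast
    have : (0:ℝ) ≤ ((Real.toNNReal (2 * M / r) : NNReal) : ℝ) := NNReal.coe_nonneg _
    linarith
  have hd : (0:ℝ) ≤ dist x y := dist_nonneg
  rcases lt_or_ge (dist x y) r with hlt | hge
  · rcases em (x ∈ K) with hx | hx
    · have hmem : y ∈ Metric.ball x r := by rwa [Metric.mem_ball, dist_comm]
      have := (hloc x hx).dist_le_mul x (Metric.mem_ball_self hr) y hmem
      calc dist (G x) (G y) ≤ L * dist x y := this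
        _ ≤ _ := mul_le_mul_of_nonneg_right hCL hd
    · rcases em (y ∈ K) with hy | hy
      · have hmem : x ∈ Metric.ball y r := by rw [Metric.mem_ball]; exact hlt
        have := (hloc y hy).dist_le_mul x hmem y (Metric.mem_ball_self hr)
        calc dist (G x) (G y) ≤ L * dist x y := this
          _ ≤ _ := mul_le_mul_of_nonneg_right hCL hd
      · simp only [hG0 x hx, hG0 y hy, dist_self]
        positivity
  · have h1 : dist (G x) (G y) ≤ 2 * M := by
      rw [Real.dist_eq]
      have := hGb x
      have := hGb y
      have h := abs_sub (G x) (G y)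
      calc |G x - G y| ≤ |G x| + |G y| := abs_sub _ _
        _ ≤ 2 * M := by linarith [hGb x, hGb y]
    calc dist (G x) (G y) ≤ 2 * M := h1
      _ = (2 * M / r) * r := by field_simp
      _ ≤ (2 * M / r) * dist x y := by
          apply mul_le_mul_of_nonneg_left hge
          positivity
      _ ≤ _ := mul_le_mul_of_nonneg_right hC2 hd

lemma aux_integrable {d : ℕ} {f : (Fin d → ℝ) → ℝ} {K : Set (Fin d → ℝ)} (hK : IsCompact K)
    (hmeas : AEStronglyMeasurable f (volume : Measure (Fin d → ℝ))) {M : ℝ}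
    (hb : ∀ x, ‖f x‖ ≤ M) (h0 : ∀ x, x ∉ K → f x = 0) :
    Integrable f (volume : Measure (Fin d → ℝ)) := by
  have hfind : f = K.indicator f := by
    funext x
    by_cases hx : x ∈ K
    · simp [hx]
    · simp [hx, h0 x hx]
  rw [hfind, integrable_indicator_iff hK.measurableSet]
  exact Measure.integrableOn_of_bounded hK.measure_lt_top.ne hmeas (ae_of_all _ hb)

lemma aux_key1d_le {f : ℝ → ℝ} {L : NNReal} (hf : LipschitzWith L f) {a b : ℝ} (hab : a ≤ b)
    (h0 : ∀ x, x ∉ Set.Ioo a b → f x = 0) :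
    ∫ x in Set.Ioc a b, deriv f x ≤ 0 := by
  classical
  set φ : ℝ → ℝ := fun x => f x + L * x with hφdef
  have hφm : Monotone φ := by
    intro x y hxy
    have h1 := hf.dist_le_mul x y
    rw [Real.dist_eq, Real.dist_eq] at h1
    have hxy' : |x - y| = y - x := by rw [abs_sub_comm]; exact abs_of_nonneg (by linarith)
    rw [hxy'] at h1
    have h2 : f x - f y ≤ (L:ℝ) * (y - x) := le_trans (le_abs_self _) h1
    simp only [hφdef]
    nlinarith
  have hD := hφm.ae_hasDerivAt
  set μφ := hφm.stieltjesFunction.measure with hμφ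
  have hcont : Continuous φ := hf.continuous.add (continuous_const.mul continuous_id)
  have hsf : ∀ x, hφm.stieltjesFunction x = φ x := by
    intro x
    rw [hφm.stieltjesFunction_eq]
    exact rightLim_eq_of_tendsto (
      (hcont.tendsto x).mono_left nhdsWithin_le_nhds)
  have hderae : ∀ᵐ x, deriv f x = (μφ.rnDeriv volume x).toReal - (L:ℝ) := by
    filter_upwards [hD] with x hx
    have h2 : HasDerivAt (fun y : ℝ => (L:ℝ) * y) (L:ℝ) x := by
      simpa using (hasDerivAt_id x).const_mul (L:ℝ)
    have h3 := hx.sub h2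
    have h4 : (φ - fun y => (L:ℝ) * y) = f := by funext y; simp [hφdef]
    rw [h4] at h3
    exact h3.deriv
  have hb : ∀ x, ‖deriv f x‖ ≤ (L:ℝ) := fun x => norm_deriv_le_of_lipschitz (𝕜 := ℝ) hf
  have hmeas : Measurable (deriv f) := measurable_deriv f
  have hIoc : volume (Set.Ioc a b) ≠ ⊤ := by
    rw [Real.volume_Ioc]; exact ENNReal.ofReal_ne_top
  have hInt : IntegrableOn (deriv f) (Set.Ioc a b) volume :=
    Measure.integrableOn_of_bounded hIoc hmeas.aestronglyMeasurable (ae_of_all _ hb)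
  have hIntconst : IntegrableOn (fun _ : ℝ => (L:ℝ)) (Set.Ioc a b) volume :=
    integrableOn_const hIoc
  have hIntD : IntegrableOn (fun x => (μφ.rnDeriv volume x).toReal) (Set.Ioc a b) volume := by
    apply (hInt.add hIntconst).congr
    refine (ae_restrict_of_ae ?_)
    filter_upwards [hderae] with x hx
    simp [hx]
  have hstep1 : ∫ x in Set.Ioc a b, deriv f x
      = (∫ x in Set.Ioc a b, (μφ.rnDeriv volume x).toReal) - ∫ _ in Set.Ioc a b, (L:ℝ) := by
    rw [← integral_sub hIntD hIntconst]
    apply integral_congr_ae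
    refine (ae_restrict_of_ae ?_)
    filter_upwards [hderae] with x hx
    simp [hx]
  have hstep2 : ∫ x in Set.Ioc a b, (μφ.rnDeriv volume x).toReal
      ≤ (μφ (Set.Ioc a b)).toReal := by
    rw [integral_toReal ((Measure.measurable_rnDeriv μφ volume).aemeasurable)
      (ae_restrict_of_ae (Measure.rnDeriv_lt_top μφ volume))]
    have h1 : ∫⁻ x in Set.Ioc a b, μφ.rnDeriv volume x ∂volume ≤ μφ (Set.Ioc a b) := by
      have h2 := Measure.withDensity_rnDeriv_le μφ volume
      have h3 := h2 (Set.Ioc a b)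
      rwa [withDensity_apply _ measurableSet_Ioc] at h3
    have hfin : μφ (Set.Ioc a b) ≠ ⊤ := by
      rw [hμφ, StieltjesFunction.measure_Ioc]
      exact ENNReal.ofReal_ne_top
    exact ENNReal.toReal_mono hfin h1
  have hμIoc : (μφ (Set.Ioc a b)).toReal = (L:ℝ) * (b - a) := by
    rw [hμφ, StieltjesFunction.measure_Ioc, hsf, hsf]
    have hfa : f a = 0 := h0 a (by simp)
    have hfb : f b = 0 := h0 b (by simp)
    rw [ENNReal.toReal_ofReal (by simp only [hφdef]; nlinarith [L.coe_nonneg])]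
    simp only [hφdef, hfa, hfb]
    ring
  have hLconst : ∫ _ in Set.Ioc a b, (L:ℝ) = (L:ℝ) * (b - a) := by
    rw [setIntegral_const, Measure.real, Real.volume_Ioc, ENNReal.toReal_ofReal (by linarith)]
    simp [mul_comm]
  rw [hstep1, hLconst]
  have := le_trans hstep2 (le_of_eq hμIoc)
  linarith

lemma aux_key1d {f : ℝ → ℝ} {L : NNReal} (hf : LipschitzWith L f) {a b : ℝ} (hab : a ≤ b)
    (h0 : ∀ x, x ∉ Set.Ioo a b → f x = 0) :
    ∫ x, deriv f x = 0 := by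
  have h1 := aux_key1d_le hf hab h0
  have h2 : ∫ x in Set.Ioc a b, deriv (fun y => -f y) x ≤ 0 := by
    apply aux_key1d_le hf.neg hab
    intro x hx
    simp [h0 x hx]
  have h3 : ∀ x, deriv (fun y => -f y) x = -deriv f x := fun x => deriv.neg
  simp only [h3] at h2
  rw [integral_neg] at h2
  have hmain : ∫ x in Set.Ioc a b, deriv f x = 0 := le_antisymm h1 (by linarith)
  -- deriv f vanishes outside Icc a b
  have hout : ∀ x, x ∉ Set.Icc a b → deriv f x = 0 := by
    intro x hx
    have hop : IsOpen (Set.Icc a b)ᶜ := isClosed_Icc.isOpen_compl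
    have hev : f =ᶠ[nhds x] (fun _ => 0) := by
      filter_upwards [hop.mem_nhds hx] with y hy
      exact h0 y (fun h => hy (Set.Ioo_subset_Icc_self h))
    rw [hev.deriv_eq]
    exact deriv_const x 0
  have heq : ∫ x, deriv f x = ∫ x in Set.Icc a b, deriv f x := by
    rw [← integral_indicator measurableSet_Icc]
    apply integral_congr_ae
    apply ae_of_all
    intro x
    by_cases hx : x ∈ Set.Icc a b
    · simp [hx]
    · simp [hx, hout x hx]
  rw [heq, integral_Icc_eq_integral_Ioc]
  exact hmain

lemma aux_keyd {n : ℕ} (i : Fin (n+1)) {G : (Fin (n+1) → ℝ) → ℝ} {L : NNReal}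
    (hG : LipschitzWith L G) (hsupp : HasCompactSupport G) :
    ∫ x, fderiv ℝ G x (Pi.single i 1) = 0 := by
  classical
  obtain ⟨R, hR⟩ : ∃ R, tsupport G ⊆ Metric.closedBall 0 R :=
    hsupp.isBounded.subset_closedBall 0
  set F : (Fin (n+1) → ℝ) → ℝ := fun x => fderiv ℝ G x (Pi.single i 1) with hF
  set F' : (Fin (n+1) → ℝ) → ℝ :=
    fun x => deriv (fun s => G (Function.update x i s)) (x i) with hF'
  have hae : ∀ᵐ x : (Fin (n+1) → ℝ), DifferentiableAt ℝ G x := hG.ae_differentiableAt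
  have hFF' : F =ᵐ[volume] F' := by
    filter_upwards [hae] with x hx
    have h2 : HasDerivAt (Function.update x i) (Pi.single i 1) (x i) :=
      hasDerivAt_update x i (x i)
    have hfd : HasFDerivAt G (fderiv ℝ G x) (Function.update x i (x i)) := by
      rw [Function.update_eq_self]; exact hx.hasFDerivAt
    have h3 := hfd.comp_hasDerivAt (x i) h2
    simp only [hF, hF']
    exact (h3.deriv).symm
  have hb : ∀ x, ‖F x‖ ≤ (L:ℝ) := by
    intro x
    have h1 : ‖fderiv ℝ G x‖ ≤ (L:ℝ) := norm_fderiv_le_of_lipschitz (𝕜 := ℝ) hG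
    have hsn : ‖(Pi.single i (1:ℝ) : Fin (n+1) → ℝ)‖ = 1 := by
      rw [Pi.norm_single (G := fun _ : Fin (n+1) => ℝ) (1:ℝ)]; exact norm_one
    calc ‖F x‖ ≤ ‖fderiv ℝ G x‖ * ‖(Pi.single i (1:ℝ) : Fin (n+1) → ℝ)‖ :=
          (fderiv ℝ G x).le_opNorm _
      _ = ‖fderiv ℝ G x‖ := by rw [hsn, mul_one]
      _ ≤ (L:ℝ) := h1
  have hF0 : ∀ x, x ∉ tsupport G → F x = 0 := by
    intro x hx
    have hev : G =ᶠ[nhds x] fun _ => 0 := by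
      filter_upwards [(isClosed_tsupport G).isOpen_compl.mem_nhds hx] with y hy
      exact image_eq_zero_of_notMem_tsupport hy
    have : fderiv ℝ G x = 0 := by rw [hev.fderiv_eq]; exact fderiv_const_apply 0
    simp [hF, this]
  have hFint : Integrable F volume :=
    aux_integrable hsupp ((measurable_fderiv_apply_const ℝ G _).aestronglyMeasurable) hb hF0
  have hF'int : Integrable F' volume := hFint.congr hFF'
  have hgoal : ∫ x, F x = ∫ x, F' x := integral_congr_ae hFF'
  rw [show (∫ x, fderiv ℝ G x (Pi.single i 1)) = ∫ x, F x from rfl, hgoal]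
  set e := MeasurableEquiv.piFinSuccAbove (fun _ : Fin (n+1) => ℝ) i with he
  have hmp : MeasurePreserving e volume volume :=
    MeasureTheory.volume_preserving_piFinSuccAbove (fun _ : Fin (n+1) => ℝ) i
  have hcomp : (∫ z : ℝ × (Fin n → ℝ), F' (e.symm z)) = ∫ x, F' x :=
    (hmp.symm e).integral_comp e.symm.measurableEmbedding F'
  rw [← hcomp]
  have hintz : Integrable (fun z : ℝ × (Fin n → ℝ) => F' (e.symm z)) volume :=
    ((hmp.symm e).integrable_comp_emb e.symm.measurableEmbedding).2 hF'int
  have hey : ∀ t (y : Fin n → ℝ), e.symm (t, y) = Fin.insertNth (α := fun _ : Fin (n+1) => ℝ) i t y := by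
    intro t y
    rfl
  have hinner : ∀ y : Fin n → ℝ, (∫ t : ℝ, F' (e.symm (t, y))) = 0 := by
    intro y
    have hgy : (fun t : ℝ => F' (e.symm (t, y)))
        = fun t => deriv (fun s => G (Fin.insertNth (α := fun _ : Fin (n+1) => ℝ) i s y)) t := by
      funext t
      rw [hey t y]
      simp only [hF']
      rw [Fin.insertNth_apply_same]
      congr 1
      funext s
      congr 1
      exact Fin.update_insertNth (α := fun _ : Fin (n+1) => ℝ) i t s y
    rw [hgy]
    have hins : LipschitzWith 1 (fun s : ℝ => Fin.insertNth (α := fun _ : Fin (n+1) => ℝ) i s y) := by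
      apply LipschitzWith.of_dist_le_mul
      intro s t
      rw [NNReal.coe_one, one_mul]
      apply (dist_pi_le_iff dist_nonneg).2
      intro j
      rcases eq_or_ne j i with rfl | hj
      · simp [Fin.insertNth_apply_same]
      · obtain ⟨k, rfl⟩ := Fin.exists_succAbove_eq hj
        simp [Fin.insertNth_apply_succAbove, dist_nonneg]
    have hgl : LipschitzWith (L * 1) (fun s : ℝ => G (Fin.insertNth (α := fun _ : Fin (n+1) => ℝ) i s y)) := hG.comp hins
    have h0 : ∀ s : ℝ, s ∉ Set.Ioo (-(|R|+1)) (|R|+1) → G (Fin.insertNth (α := fun _ : Fin (n+1) => ℝ) i s y) = 0 := by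
      intro s hs
      apply image_eq_zero_of_notMem_tsupport
      intro hmem
      have h1 : ‖Fin.insertNth (α := fun _ : Fin (n+1) => ℝ) i s y‖ ≤ R := by
        have := hR hmem
        rwa [Metric.mem_closedBall, dist_zero_right] at this
      have h2 : |s| ≤ ‖Fin.insertNth (α := fun _ : Fin (n+1) => ℝ) i s y‖ := by
        have h3 := norm_le_pi_norm (Fin.insertNth (α := fun _ : Fin (n+1) => ℝ) i s y) i
        rwa [Fin.insertNth_apply_same, Real.norm_eq_abs] at h3
      simp only [Set.mem_Ioo, not_and_or, not_lt] at hs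
      have hRle : R ≤ |R| := le_abs_self R
      rcases hs with hs | hs
      · have := neg_abs_le s
        linarith
      · have := le_abs_self s
        linarith
    exact aux_key1d hgl (by linarith [abs_nonneg R]) h0
  have hprod : (volume : Measure (ℝ × (Fin n → ℝ))) = (volume : Measure ℝ).prod volume :=
    Measure.volume_eq_prod _ _
  rw [hprod] at hintz
  rw [show (∫ z : ℝ × (Fin n → ℝ), F' (e.symm z))
      = ∫ z : ℝ × (Fin n → ℝ), F' (e.symm z) ∂((volume : Measure ℝ).prod volume) by rw [← hprod]]
  rw [integral_prod_symm _ hintz]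
  simp only [hinner]
  simp


/-- The open cell of points of `E` whose coordinates are strictly decreasing
along the permutation `τ`: `E_τ = {x ∈ E : x_{τ(1)} > x_{τ(2)} > ⋯ > x_{τ(d)}}`. -/
def cell {d : ℕ} (E : Set (Fin d → ℝ)) (τ : Equiv.Perm (Fin d)) : Set (Fin d → ℝ) :=
  {x ∈ E | StrictAnti fun k => x (τ k)}

/-- **Integration by parts (Theorem 2.2).** -/
theorem stmt_0 {d : ℕ} (hd : 2 ≤ d)
    (E : Set (Fin d → ℝ)) (hEopen : IsOpen E) (hEne : E.Nonempty)
    (hEconn : IsConnected E)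
    (c : (Fin d → ℝ) → Matrix (Fin d) (Fin d) ℝ) (p : (Fin d → ℝ) → ℝ)
    -- standing assumption on (c, p)
    (hc_pos : ∀ x ∈ E, (c x).PosDef)
    (hc_cont : ∀ i j, ContinuousOn (fun x => c x i j) E)
    (hc_C1 : ∀ τ : Equiv.Perm (Fin d), ∀ i j, ContDiffOn ℝ 1 (fun x => c x i j) (cell E τ))
    (hp_pos : ∀ x ∈ E, 0 < p x)
    (hp_cont : ContinuousOn p E)
    (hp_C1 : ∀ τ : Equiv.Perm (Fin d), ContDiffOn ℝ 1 p (cell E τ))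
    (hcp_lip : ∀ K, K ⊆ E → IsCompact K →
      ∃ L : NNReal, ∀ i j, LipschitzOnWith L (fun x => c x i j * p x) K)
    -- v ∈ C¹(E)
    (v : (Fin d → ℝ) → ℝ) (hv : ContDiffOn ℝ 1 v E)
    -- ξ ∈ C¹_{𝒯,c}(E; ℝ^d)
    (ξ : (Fin d → ℝ) → Fin d → ℝ)
    (hξ_cont : ContinuousOn ξ E)
    (hξ_supp : closure {x | ξ x ≠ 0} ⊆ E)
    (hξ_comp : IsCompact (closure {x | ξ x ≠ 0}))
    (hξ_C1 : ∀ τ : Equiv.Perm (Fin d), ContDiffOn ℝ 1 ξ (cell E τ))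
    -- the product cξp is locally Lipschitz on E
    (hcξp_lip : ∀ K, K ⊆ E → IsCompact K →
      ∃ L : NNReal, ∀ i, LipschitzOnWith L (fun x => ∑ j, c x i j * ξ x j * p x) K) :
    (1 / 2 : ℝ) * ∫ x in E, ∑ i, ∑ j,
        fderiv ℝ v x (Pi.single i 1) * c x i j * ξ x j * p x
      = -(1 / 2 : ℝ) * ∫ x in E, v x *
          ∑ i, fderiv ℝ (fun y => ∑ j, c y i j * ξ y j * p y) x (Pi.single i 1) := by
  classical
  obtain ⟨n, rfl⟩ : ∃ n, d = n + 1 := ⟨d - 1, by omega⟩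
  set K := closure {x : Fin (n+1) → ℝ | ξ x ≠ 0} with hKdef
  have hKE : K ⊆ E := hξ_supp
  have hKc : IsCompact K := hξ_comp
  have hξ0 : ∀ x, x ∉ K → ξ x = 0 := by
    intro x hx
    by_contra hne
    exact hx (subset_closure hne)
  obtain ⟨δ, hδpos, hδE⟩ := hKc.exists_cthickening_subset_open hEopen hKE
  set K' := Metric.cthickening δ K with hK'def
  have hK'c : IsCompact K' := Metric.isCompact_iff_isClosed_bounded.2
    ⟨Metric.isClosed_cthickening, hKc.isBounded.cthickening⟩
  have hK'E : K' ⊆ E := hδE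
  have hKK' : K ⊆ K' := Metric.self_subset_cthickening K
  have hball : ∀ x ∈ K, Metric.ball x δ ⊆ K' := by
    intro x hx y hy
    exact Metric.thickening_subset_cthickening δ K
      (Metric.mem_thickening_iff.2 ⟨x, hx, hy⟩)
  set hfun : Fin (n+1) → (Fin (n+1) → ℝ) → ℝ :=
    fun i y => ∑ j, c y i j * ξ y j * p y with hhdef
  have hh0 : ∀ i x, x ∉ K → hfun i x = 0 := by
    intro i x hx
    have h1 := hξ0 x hx
    simp only [hhdef]
    have : ∀ j, ξ x j = 0 := fun j => by rw [h1]; rfl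
    simp [this]
  have hξj : ∀ j, ContinuousOn (fun x => ξ x j) E :=
    fun j => (continuous_apply j).comp_continuousOn hξ_cont
  have hh_cont : ∀ i, ContinuousOn (hfun i) E := by
    intro i
    apply continuousOn_finset_sum
    intro j _
    exact ((hc_cont i j).mul (hξj j)).mul hp_cont
  obtain ⟨Lh, hLh⟩ := hcξp_lip K' hK'E hK'c
  have hhBd : ∀ i, ∃ B : ℝ, 0 ≤ B ∧ ∀ x, |hfun i x| ≤ B := by
    intro i
    obtain ⟨B, hB⟩ := hK'c.exists_bound_of_continuousOn ((hh_cont i).mono hK'E)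
    refine ⟨max B 0, le_max_right _ _, ?_⟩
    intro x
    by_cases hx : x ∈ K'
    · exact le_trans (by simpa [Real.norm_eq_abs] using hB x hx) (le_max_left _ _)
    · rw [hh0 i x (fun h => hx (hKK' h))]
      simp
  choose Bh hBh0 hBh using hhBd
  obtain ⟨Bv, hBv⟩ := hK'c.exists_bound_of_continuousOn (hv.continuousOn.mono hK'E)
  have hfd_cont : ContinuousOn (fderiv ℝ v) E := hv.continuousOn_fderiv_of_isOpen hEopen le_rfl
  obtain ⟨Bv', hBv'⟩ := hK'c.exists_bound_of_continuousOn (hfd_cont.mono hK'E)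
  have hvdiff : ∀ x ∈ E, DifferentiableAt ℝ v x := fun x hx =>
    (hv.differentiableOn one_ne_zero).differentiableAt (hEopen.mem_nhds hx)
  have hvlip : ∀ x ∈ K, LipschitzOnWith (Real.toNNReal Bv') v (Metric.ball x δ) := by
    intro x hx
    apply Convex.lipschitzOnWith_of_nnnorm_fderiv_le
      (fun y hy => hvdiff y (hK'E (hball x hx hy))) ?_ (convex_ball x δ)
    intro y hy
    have h1 := hBv' y (hball x hx hy)
    rw [← NNReal.coe_le_coe, coe_nnnorm, Real.coe_toNNReal']
    exact le_trans h1 (le_max_left _ _)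
  have hhlip : ∀ i, ∃ C : NNReal, LipschitzWith C (hfun i) := by
    intro i
    refine ⟨_, aux_glue (L := Lh) hδpos (hBh0 i) (hBh i) (hh0 i) ?_⟩
    intro x hx
    exact (hLh i).mono (hball x hx)
  choose Ch hCh using hhlip
  set gfun : Fin (n+1) → (Fin (n+1) → ℝ) → ℝ := fun i x => v x * hfun i x with hgdef
  have hg0 : ∀ i x, x ∉ K → gfun i x = 0 := by
    intro i x hx
    simp only [hgdef]
    rw [hh0 i x hx, mul_zero]
  have hvK : ∀ x ∈ K', |v x| ≤ |Bv| :=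
    fun x hx => le_trans (by simpa [Real.norm_eq_abs] using hBv x hx) (le_abs_self _)
  have hgB : ∀ i, ∀ x, |gfun i x| ≤ (|Bv| + 1) * Bh i := by
    intro i x
    by_cases hx : x ∈ K
    · simp only [hgdef, abs_mul]
      have h1 := hvK x (hKK' hx)
      have h2 := hBh i x
      nlinarith [abs_nonneg (v x), abs_nonneg (hfun i x), hBh0 i, abs_nonneg Bv]
    · rw [hg0 i x hx]
      simp only [abs_zero]
      have := hBh0 i
      have : (0:ℝ) ≤ |Bv| + 1 := by positivity
      nlinarith [hBh0 i]
  have hglip : ∀ i, ∃ C : NNReal, LipschitzWith C (gfun i) := by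
    intro i
    have hM0 : (0:ℝ) ≤ (|Bv| + 1) * Bh i := mul_nonneg (by positivity) (hBh0 i)
    refine ⟨_, aux_glue (L := Real.toNNReal (|Bv| * (Ch i : ℝ) + Bh i * ((Real.toNNReal Bv' : NNReal) : ℝ))) hδpos hM0 (hgB i) (hg0 i) ?_⟩
    intro x hx
    have hb1 := hvlip x hx
    have hb2 : LipschitzOnWith (Ch i) (hfun i) (Metric.ball x δ) :=
      LipschitzWith.lipschitzOnWith (hCh i)
    have hbv : ∀ y ∈ Metric.ball x δ, |v y| ≤ |Bv| := fun y hy => hvK y (hball x hx hy)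
    have hbh : ∀ y ∈ Metric.ball x δ, |hfun i y| ≤ Bh i := fun y _ => hBh i y
    exact aux_mul_lipschitzOnWith hb1 hb2 hbv hbh
  choose Cg hCg using hglip
  have hg_supp : ∀ i, HasCompactSupport (gfun i) := fun i =>
    HasCompactSupport.intro hKc (fun x hx => hg0 i x hx)
  have hzero : ∀ i : Fin (n+1), ∫ x, fderiv ℝ (gfun i) x (Pi.single i 1) = 0 :=
    fun i => aux_keyd i (hCg i) (hg_supp i)
  have hhfd0 : ∀ i x, x ∉ K → fderiv ℝ (hfun i) x = 0 := by
    intro i x hx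
    have hev : hfun i =ᶠ[nhds x] fun _ => 0 := by
      filter_upwards [hKc.isClosed.isOpen_compl.mem_nhds hx] with y hy
      exact hh0 i y hy
    rw [hev.fderiv_eq]
    exact fderiv_const_apply 0
  have hgfd0 : ∀ i x, x ∉ K → fderiv ℝ (gfun i) x = 0 := by
    intro i x hx
    have hev : gfun i =ᶠ[nhds x] fun _ => 0 := by
      filter_upwards [hKc.isClosed.isOpen_compl.mem_nhds hx] with y hy
      exact hg0 i y hy
    rw [hev.fderiv_eq]
    exact fderiv_const_apply 0
  have hhdiff : ∀ᵐ x : (Fin (n+1) → ℝ), ∀ i, DifferentiableAt ℝ (hfun i) x :=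
    ae_all_iff.2 fun i => (hCh i).ae_differentiableAt
  set I1 : Fin (n+1) → (Fin (n+1) → ℝ) → ℝ :=
    fun i x => fderiv ℝ v x (Pi.single i 1) * hfun i x with hI1def
  set I2 : Fin (n+1) → (Fin (n+1) → ℝ) → ℝ :=
    fun i x => v x * fderiv ℝ (hfun i) x (Pi.single i 1) with hI2def
  have hEmeas : MeasurableSet E := hEopen.measurableSet
  have hsingle : ∀ i : Fin (n+1), ‖(Pi.single i (1:ℝ) : Fin (n+1) → ℝ)‖ = 1 := by
    intro i
    rw [Pi.norm_single (G := fun _ : Fin (n+1) => ℝ) (1:ℝ)]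
    exact norm_one
  have hEsplit : K ∪ (E \ K) = E := Set.union_diff_cancel hKE
  have hdiffmeas : MeasurableSet (E \ K) := hEmeas.diff hKc.isClosed.measurableSet
  have hI1int : ∀ i, IntegrableOn (I1 i) E (volume : Measure (Fin (n+1) → ℝ)) := by
    intro i
    have hc1 : ContinuousOn (I1 i) E := by
      simp only [hI1def]
      exact (hfd_cont.clm_apply continuousOn_const).mul (hh_cont i)
    have h1 : IntegrableOn (I1 i) K volume := (hc1.mono hKE).integrableOn_compact hKc
    have h2 : IntegrableOn (I1 i) (E \ K) volume := by
      apply (integrable_zero _ _ _).integrableOn.congr_fun ?_ hdiffmeas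
      intro x hx
      simp only [hI1def]
      rw [hh0 i x hx.2, mul_zero]
      rfl
    exact (h1.union h2).mono_set (by rw [hEsplit])
  have hI2int : ∀ i, IntegrableOn (I2 i) E (volume : Measure (Fin (n+1) → ℝ)) := by
    intro i
    have h1 : IntegrableOn (I2 i) K volume := by
      constructor
      · apply AEStronglyMeasurable.mul
        · exact (hv.continuousOn.mono hKE).aestronglyMeasurable
            hKc.isClosed.measurableSet
        · exact ((measurable_fderiv_apply_const ℝ (hfun i) _).aestronglyMeasurable).restrict
      · apply HasFiniteIntegral.restrict_of_bounded (C := |Bv| * (Ch i)) hKc.measure_lt_top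
        apply (ae_restrict_iff' hKc.isClosed.measurableSet).2
        apply ae_of_all
        intro x hx
        have h2 : ‖fderiv ℝ (hfun i) x (Pi.single i 1)‖ ≤ (Ch i : ℝ) := by
          calc ‖fderiv ℝ (hfun i) x (Pi.single i 1)‖
              ≤ ‖fderiv ℝ (hfun i) x‖ * ‖(Pi.single i (1:ℝ) : Fin (n+1) → ℝ)‖ :=
                (fderiv ℝ (hfun i) x).le_opNorm _
            _ = ‖fderiv ℝ (hfun i) x‖ := by rw [hsingle i, mul_one]
            _ ≤ (Ch i : ℝ) := norm_fderiv_le_of_lipschitz (𝕜 := ℝ) (hCh i)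
        have h3 := hvK x (hKK' hx)
        simp only [hI2def]
        rw [norm_mul]
        apply mul_le_mul ?_ h2 (norm_nonneg _) (abs_nonneg _)
        rwa [Real.norm_eq_abs]
    have h2 : IntegrableOn (I2 i) (E \ K) volume := by
      apply (integrable_zero _ _ _).integrableOn.congr_fun ?_ hdiffmeas
      intro x hx
      simp only [hI2def]
      rw [hhfd0 i x hx.2]
      simp
    exact (h1.union h2).mono_set (by rw [hEsplit])
  -- a.e. identity on E
  have hae_eq : ∀ i : Fin (n+1),
      (fun x => fderiv ℝ (gfun i) x (Pi.single i 1))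
        =ᵐ[volume.restrict E] (fun x => I1 i x + I2 i x) := by
    intro i
    filter_upwards [ae_restrict_of_ae hhdiff, ae_restrict_mem hEmeas] with x hx hxE
    have hdv := hvdiff x hxE
    have hdh := hx i
    have h2 : fderiv ℝ (gfun i) x
        = v x • fderiv ℝ (hfun i) x + hfun i x • fderiv ℝ v x := by
      simp only [hgdef]
      exact fderiv_mul hdv hdh
    rw [h2]
    simp only [ContinuousLinearMap.add_apply, ContinuousLinearMap.coe_smul',
      Pi.smul_apply, smul_eq_mul, hI1def, hI2def]
    ring
  -- vanishing off E
  have hext : ∀ i : Fin (n+1),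
      ∫ x in E, fderiv ℝ (gfun i) x (Pi.single i 1)
        = ∫ x, fderiv ℝ (gfun i) x (Pi.single i 1) := by
    intro i
    rw [← integral_indicator hEmeas]
    apply integral_congr_ae
    apply ae_of_all
    intro x
    by_cases hx : x ∈ E
    · simp [hx]
    · simp only [Set.indicator_of_notMem hx]
      rw [hgfd0 i x (fun h => hx (hKE h))]
      simp
  have hkey : ∀ i : Fin (n+1), (∫ x in E, I1 i x) + (∫ x in E, I2 i x) = 0 := by
    intro i
    rw [← integral_add (hI1int i) (hI2int i)]
    rw [← integral_congr_ae (hae_eq i)]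
    rw [hext i]
    exact hzero i
  -- final computation
  have hA : (∫ x in E, ∑ i, ∑ j,
      fderiv ℝ v x (Pi.single i 1) * c x i j * ξ x j * p x)
      = ∑ i, ∫ x in E, I1 i x := by
    rw [← integral_finset_sum Finset.univ (fun i _ => hI1int i)]
    apply integral_congr_ae
    apply ae_of_all
    intro x
    apply Finset.sum_congr rfl
    intro i _
    simp only [hI1def, hhdef, Finset.mul_sum]
    apply Finset.sum_congr rfl
    intro j _
    ring
  have hB : (∫ x in E, v x *
      ∑ i, fderiv ℝ (fun y => ∑ j, c y i j * ξ y j * p y) x (Pi.single i 1))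
      = ∑ i, ∫ x in E, I2 i x := by
    rw [← integral_finset_sum Finset.univ (fun i _ => hI2int i)]
    apply integral_congr_ae
    apply ae_of_all
    intro x
    simp only [Finset.mul_sum]
    rfl
  have hsum : (∑ i, ∫ x in E, I1 i x) + (∑ i, ∫ x in E, I2 i x) = 0 := by
    rw [← Finset.sum_add_distrib]
    exact Finset.sum_eq_zero fun i _ => hkey i
  rw [hA, hB]
  linarith
end

section
/- Let d ≥ 2 and let E ⊆ ℝ^d be a nonempty open connected set, and let (c,p) satisfy the standing assumption. Let u : E → ℝ be continuous with compact support contained in E, twice continuously differentiable on each cell E_τ, and assume its gradient ∇u (defined on the union of the cells) extends to a continuous vector field on E and that x ↦ c(x)∇u(x)p(x) is locally Lipschitz on E. Then for every continuously differentiable v : E → ℝ, (1/2)∫_E (∇u(x))ᵀ c(x) ∇v(x) p(x) dx = −∫_E v(x) (Lu)(x) p(x) dx, where Lu := bᵀ∇u + (1/2)tr(c∇²u) and b := (1/2)div c + (1/2)c∇log p are defined Lebesgue-a.e. on E (on each open cell E_τ all derivatives exist classically). -/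
open MeasureTheory Metric

lemma cell_isOpen {d : ℕ} {E : Set (Fin d → ℝ)} (hE : IsOpen E) (τ : Equiv.Perm (Fin d)) :
    IsOpen (cell E τ) := by
  have : cell E τ = E ∩ ⋂ (k : Fin d) (l : Fin d) (_ : k < l), {x | x (τ l) < x (τ k)} := by
    ext x
    simp only [cell, Set.mem_setOf_eq, Set.mem_inter_iff, Set.mem_iInter]
    exact ⟨fun ⟨h1, h2⟩ => ⟨h1, fun k l hkl => h2 hkl⟩, fun ⟨h1, h2⟩ => ⟨h1, fun k l hkl => h2 k l hkl⟩⟩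
  rw [this]
  exact hE.inter (isOpen_iInter_of_finite fun k => isOpen_iInter_of_finite fun l =>
    isOpen_iInter_of_finite fun _ => isOpen_lt (continuous_apply _) (continuous_apply _))

lemma exists_cell_mem {d : ℕ} {E : Set (Fin d → ℝ)} {x : Fin d → ℝ} (hx : x ∈ E)
    (hinj : Function.Injective x) : ∃ τ : Equiv.Perm (Fin d), x ∈ cell E τ := by
  classical
  have hmono : StrictMono (x ∘ Tuple.sort x) :=
    (Tuple.monotone_sort x).strictMono_of_injective (hinj.comp (Tuple.sort x).injective)
  refine ⟨(Fin.revPerm).trans (Tuple.sort x), hx, ?_⟩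
  intro a b hab
  exact hmono (Fin.rev_lt_rev.mpr hab)

lemma measure_noninj {d : ℕ} :
    volume {x : Fin d → ℝ | ¬ Function.Injective x} = 0 := by
  have hsub : {x : Fin d → ℝ | ¬ Function.Injective x} ⊆
      ⋃ (i : Fin d) (j : Fin d) (_ : i ≠ j), {x : Fin d → ℝ | x i = x j} := by
    intro x hx
    simp only [Function.Injective, not_forall] at hx
    obtain ⟨i, j, hij, hne⟩ := hx
    exact Set.mem_iUnion.2 ⟨i, Set.mem_iUnion.2 ⟨j, Set.mem_iUnion.2 ⟨hne, hij⟩⟩⟩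
  refine measure_mono_null hsub ?_
  refine measure_iUnion_null fun i => measure_iUnion_null fun j => measure_iUnion_null fun hij => ?_
  set φ : (Fin d → ℝ) →ₗ[ℝ] ℝ := (LinearMap.proj i : (Fin d → ℝ) →ₗ[ℝ] ℝ)
    - (LinearMap.proj j : (Fin d → ℝ) →ₗ[ℝ] ℝ) with hφ
  have hker : {x : Fin d → ℝ | x i = x j} = (LinearMap.ker φ : Set (Fin d → ℝ)) := by
    ext x
    simp [hφ, sub_eq_zero, LinearMap.mem_ker]
  rw [hker]
  refine Measure.addHaar_submodule _ _ ?_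
  intro htop
  have h1 : Pi.single i (1:ℝ) ∈ LinearMap.ker φ := htop ▸ Submodule.mem_top
  simp only [LinearMap.mem_ker, hφ, LinearMap.sub_apply, LinearMap.proj_apply] at h1
  rw [Pi.single_eq_same, Pi.single_eq_of_ne (Ne.symm hij)] at h1
  norm_num at h1

lemma exists_injective_mem {d : ℕ} {U : Set (Fin d → ℝ)} (hU : IsOpen U) (hne : U.Nonempty) :
    ∃ y ∈ U, Function.Injective y := by
  obtain ⟨x, hx⟩ := hne
  obtain ⟨ε, εpos, hball⟩ := Metric.isOpen_iff.1 hU x hx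
  have hBfin : (⋃ (i : Fin d) (j : Fin d) (_ : i ≠ j),
      {(x j - x i) / ((i : ℝ) - (j : ℝ))}).Finite :=
    Set.finite_iUnion fun i => Set.finite_iUnion fun j => Set.finite_iUnion fun _ =>
      Set.finite_singleton _
  have hIoo : (Set.Ioo (0:ℝ) (ε / (d + 1))).Infinite :=
    Set.Ioo_infinite (by positivity)
  obtain ⟨t, ht⟩ := (hIoo.diff hBfin).nonempty
  obtain ⟨⟨ht0, htε⟩, htB⟩ := ht
  refine ⟨fun i => x i + t * (i : ℝ), hball ?_, ?_⟩
  · rw [Metric.mem_ball, dist_pi_lt_iff εpos]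
    intro i
    rw [Real.dist_eq]
    have : |x i + t * (i:ℝ) - x i| = t * (i:ℝ) := by
      rw [add_sub_cancel_left, abs_of_nonneg (by positivity)]
    rw [this]
    calc t * (i:ℝ) ≤ t * d := by
          have : (i:ℝ) ≤ d := by exact_mod_cast (i.2.le)
          nlinarith
    _ < ε := by
          rw [lt_div_iff₀ (by positivity)] at htε
          nlinarith
  · intro i j hij
    by_contra hne
    apply htB
    have hvij : (i:ℝ) ≠ (j:ℝ) := by
      exact_mod_cast fun h => hne (Fin.val_injective (by exact_mod_cast h))
    have hij' : x i + t * (i:ℝ) = x j + t * (j:ℝ) := hij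
    have ht' : t = (x j - x i) / ((i:ℝ) - (j:ℝ)) := by
      field_simp [sub_ne_zero.mpr hvij]
      ring_nf
      ring_nf at hij'
      linarith
    exact Set.mem_iUnion.2 ⟨i, Set.mem_iUnion.2 ⟨j, Set.mem_iUnion.2 ⟨hne, by simp [ht']⟩⟩⟩

lemma lineDeriv_congr_nhds {d : ℕ} {f g : (Fin d → ℝ) → ℝ} {x w : Fin d → ℝ}
    (h : f =ᶠ[nhds x] g) : lineDeriv ℝ f x w = lineDeriv ℝ g x w := by
  have hc : Filter.Tendsto (fun t : ℝ => x + t • w) (nhds 0) (nhds x) := by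
    have : Continuous (fun t : ℝ => x + t • w) := by continuity
    simpa using this.tendsto 0
  exact Filter.EventuallyEq.deriv_eq (h.comp_tendsto hc)

lemma lineDeriv_zero_of_eventually_zero {d : ℕ} {f : (Fin d → ℝ) → ℝ} {x w : Fin d → ℝ}
    (h : f =ᶠ[nhds x] fun _ => (0:ℝ)) : lineDeriv ℝ f x w = 0 := by
  rw [lineDeriv_congr_nhds h]
  show deriv (fun _ : ℝ => (0:ℝ)) 0 = 0
  simp

lemma alg_identity {n : ℕ} (P : ℝ) (hP : P ≠ 0) (cc h : Fin n → Fin n → ℝ)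
    (D : Fin n → Fin n → Fin n → ℝ) (g q : Fin n → ℝ)
    (hc : ∀ a b, cc a b = cc b a) (hD : ∀ dir a b, D dir a b = D dir b a) :
    (∑ j, ∑ k, (cc j k * g k * q j + P * (cc j k * h j k) + P * (g k * D j j k)))
      = 2 * (((∑ i, ((1/2 : ℝ) * (∑ j, D j i j) + (1/2 : ℝ) * ∑ j, cc i j * (q j / P)) * g i)
          + (1/2 : ℝ) * ∑ i, ∑ j, cc i j * h i j) * P) := by
  symm
  have step1 : ∑ i, ((1/2 : ℝ) * (∑ j, D j i j) + (1/2 : ℝ) * ∑ j, cc i j * (q j / P)) * g i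
      = (1/2 : ℝ) * ∑ i, ((∑ j, D j i j) + (∑ j, cc i j * (q j / P))) * g i := by
    rw [Finset.mul_sum]
    exact Finset.sum_congr rfl fun i _ => by ring
  calc 2 * (((∑ i, ((1/2 : ℝ) * (∑ j, D j i j) + (1/2 : ℝ) * ∑ j, cc i j * (q j / P)) * g i)
          + (1/2 : ℝ) * ∑ i, ∑ j, cc i j * h i j) * P)
      = (∑ i, ((∑ j, D j i j) + (∑ j, cc i j * (q j / P))) * g i) * P
        + (∑ i, ∑ j, cc i j * h i j) * P := by
        rw [step1]; ring
    _ = (∑ i, ∑ j, (D j i j * g i * P + cc i j * (q j / P) * g i * P))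
        + (∑ i, ∑ j, cc i j * h i j * P) := by
        congr 1
        · rw [Finset.sum_mul]
          refine Finset.sum_congr rfl fun i _ => ?_
          rw [add_mul, add_mul, Finset.sum_mul, Finset.sum_mul, Finset.sum_mul, Finset.sum_mul,
            ← Finset.sum_add_distrib]
        · rw [Finset.sum_mul]
          exact Finset.sum_congr rfl fun i _ => by rw [Finset.sum_mul]
    _ = (∑ j, ∑ k, (cc j k * g k * q j + P * (g k * D j j k)))
        + (∑ j, ∑ k, P * (cc j k * h j k)) := by
        congr 1
        · rw [Finset.sum_comm]
          refine Finset.sum_congr rfl fun j _ => Finset.sum_congr rfl fun i _ => ?_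
          rw [hD j j i, hc j i]
          field_simp
          ring
        · exact Finset.sum_congr rfl fun i _ => Finset.sum_congr rfl fun j _ => by ring
    _ = ∑ j, ∑ k, (cc j k * g k * q j + P * (cc j k * h j k) + P * (g k * D j j k)) := by
        rw [← Finset.sum_add_distrib]
        refine Finset.sum_congr rfl fun j _ => ?_
        rw [← Finset.sum_add_distrib]
        exact Finset.sum_congr rfl fun k _ => by ring

/-- **Theorem 2.2, second part:** `𝓔(u,v) = (-Lu, v)_{L²(E; p dx)}` for
`u ∈ C²_{𝒯,c}(E)`. -/
theorem stmt_1 {d : ℕ} (hd : 2 ≤ d)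
    (E : Set (Fin d → ℝ)) (hEopen : IsOpen E) (hEne : E.Nonempty)
    (hEconn : IsConnected E)
    (c : (Fin d → ℝ) → Matrix (Fin d) (Fin d) ℝ) (p : (Fin d → ℝ) → ℝ)
    -- standing assumption on (c, p)
    (hc_pos : ∀ x ∈ E, (c x).PosDef)
    (hc_cont : ∀ i j, ContinuousOn (fun x => c x i j) E)
    (hc_C1 : ∀ τ : Equiv.Perm (Fin d), ∀ i j, ContDiffOn ℝ 1 (fun x => c x i j) (cell E τ))
    (hp_pos : ∀ x ∈ E, 0 < p x)
    (hp_cont : ContinuousOn p E)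
    (hp_C1 : ∀ τ : Equiv.Perm (Fin d), ContDiffOn ℝ 1 p (cell E τ))
    (hcp_lip : ∀ K, K ⊆ E → IsCompact K →
      ∃ L : NNReal, ∀ i j, LipschitzOnWith L (fun x => c x i j * p x) K)
    -- u : continuous, compactly supported in E, C² on each cell
    (u : (Fin d → ℝ) → ℝ)
    (hu_cont : ContinuousOn u E)
    (hu_supp : closure {x | u x ≠ 0} ⊆ E)
    (hu_comp : IsCompact (closure {x | u x ≠ 0}))
    (hu_C2 : ∀ τ : Equiv.Perm (Fin d), ContDiffOn ℝ 2 u (cell E τ))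
    -- the gradient of u extends to a continuous vector field G on E
    (G : (Fin d → ℝ) → Fin d → ℝ)
    (hG_cont : ContinuousOn G E)
    (hG_grad : ∀ τ : Equiv.Perm (Fin d), ∀ x ∈ cell E τ, ∀ i,
      G x i = fderiv ℝ u x (Pi.single i 1))
    -- c ∇u p is locally Lipschitz on E
    (hcGp_lip : ∀ K, K ⊆ E → IsCompact K →
      ∃ L : NNReal, ∀ i, LipschitzOnWith L (fun x => ∑ j, c x i j * G x j * p x) K) :
    ∀ v : (Fin d → ℝ) → ℝ, ContDiffOn ℝ 1 v E →
      (1 / 2 : ℝ) * ∫ x in E, (∑ i, ∑ j,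
          fderiv ℝ u x (Pi.single i 1) * c x i j * fderiv ℝ v x (Pi.single j 1)) * p x
        = - ∫ x in E, v x *
            -- Lu = bᵀ∇u + ½ tr(c ∇²u), with b = ½ div c + ½ c ∇ log p
            ((∑ i, ((1 / 2 : ℝ) * (∑ j, fderiv ℝ (fun y => c y i j) x (Pi.single j 1))
                  + (1 / 2 : ℝ) * ∑ j, c x i j *
                      fderiv ℝ (fun y => Real.log (p y)) x (Pi.single j 1))
                * fderiv ℝ u x (Pi.single i 1))
              + (1 / 2 : ℝ) * ∑ i, ∑ j, c x i j *
                  fderiv ℝ (fun y => fderiv ℝ u y (Pi.single j 1)) x (Pi.single i 1))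
            * p x := by
  intro v hv
  classical
  set S := closure {x | u x ≠ 0} with hSdef
  have hSE : S ⊆ E := hu_supp
  have hS_closed : IsClosed S := isClosed_closure
  have hu0 : ∀ x ∉ S, u x = 0 := fun x hx => by
    by_contra h; exact hx (subset_closure h)
  have hdu0 : ∀ x ∉ S, fderiv ℝ u x = 0 := by
    intro x hx
    have hev : u =ᶠ[nhds x] (fun _ => (0:ℝ)) := by
      filter_upwards [hS_closed.isOpen_compl.mem_nhds hx] with y hy using hu0 y hy
    rw [hev.fderiv_eq]; exact fderiv_const_apply 0
  -- G vanishes on E \ S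
  have hG0 : ∀ x ∈ E, x ∉ S → ∀ i, G x i = 0 := by
    intro x hxE hxS i
    set W : Set (Fin d → ℝ) := E \ S with hWdef
    have hWopen : IsOpen W := hEopen.sdiff hS_closed
    set A : Set (Fin d → ℝ) := {y ∈ W | Function.Injective y} with hAdef
    have hA0 : ∀ y ∈ A, G y i = 0 := by
      rintro y ⟨⟨hyE, hyS⟩, hyinj⟩
      obtain ⟨τ, hyτ⟩ := exists_cell_mem hyE hyinj
      rw [hG_grad τ y hyτ i, hdu0 y hyS]
      rfl
    have hxcl : x ∈ closure A := by
      rw [_root_.mem_closure_iff]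
      intro o ho hxo
      obtain ⟨y, hyoW, hyinj⟩ := exists_injective_mem (ho.inter hWopen) ⟨x, hxo, hxE, hxS⟩
      exact ⟨y, hyoW.1, hyoW.2, hyinj⟩
    have hne : (nhdsWithin x A).NeBot := mem_closure_iff_nhdsWithin_neBot.1 hxcl
    have h1 : Filter.Tendsto (fun y => G y i) (nhdsWithin x A) (nhds (G x i)) := by
      have := (hG_cont.continuousWithinAt hxE : ContinuousWithinAt G E x).mono
        (show A ⊆ E from fun y hy => hy.1.1)
      exact ((continuous_apply i).continuousAt.comp_continuousWithinAt this : _)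
    have h2 : Filter.Tendsto (fun y => G y i) (nhdsWithin x A) (nhds 0) := by
      refine Filter.Tendsto.congr' ?_ tendsto_const_nhds
      filter_upwards [self_mem_nhdsWithin] with y hy using (hA0 y hy).symm
    exact tendsto_nhds_unique h1 h2
  -- the flux functions
  set Φ : Fin d → (Fin d → ℝ) → ℝ := fun i x => ∑ j, c x i j * G x j * p x with hΦdef
  set F : Fin d → (Fin d → ℝ) → ℝ := fun i => Set.indicator E (Φ i) with hFdef
  have hFE : ∀ i, ∀ x ∈ E, F i x = Φ i x := fun i x hx => Set.indicator_of_mem hx _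
  have hΦcont : ∀ i, ContinuousOn (Φ i) E := by
    intro i
    rw [hΦdef]
    refine continuousOn_finset_sum _ fun j _ => ?_
    exact ((hc_cont i j).mul ((continuous_apply j).comp_continuousOn hG_cont)).mul hp_cont
  have hΦ0 : ∀ i, ∀ x ∈ E, x ∉ S → Φ i x = 0 := by
    intro i x hxE hxS
    simp only [hΦdef]
    refine Finset.sum_eq_zero fun j _ => by rw [hG0 x hxE hxS j]; ring
  have hF0 : ∀ i x, x ∉ S → F i x = 0 := by
    intro i x hx
    by_cases hxE : x ∈ E
    · rw [hFE i x hxE]; exact hΦ0 i x hxE hx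
    · exact Set.indicator_of_notMem hxE _
  have hFline0 : ∀ i, ∀ x ∉ S, ∀ w, lineDeriv ℝ (F i) x w = 0 := by
    intro i x hx w
    refine lineDeriv_zero_of_eventually_zero ?_
    filter_upwards [hS_closed.isOpen_compl.mem_nhds hx] with y hy using hF0 i y hy
  -- thickening of S inside E
  obtain ⟨δ, δpos, hδ⟩ := hu_comp.exists_cthickening_subset_open hEopen hu_supp
  set K : Set (Fin d → ℝ) := cthickening δ S with hKdef
  have hKcomp : IsCompact K := hu_comp.cthickening
  have hKE : K ⊆ E := hδ
  have hSK : S ⊆ K := self_subset_cthickening S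
  -- Lipschitz property of F
  obtain ⟨M, hFlip⟩ : ∃ M : NNReal, ∀ i, LipschitzWith M (F i) := by
    obtain ⟨L, hL⟩ := hcGp_lip K hKE hKcomp
    have hL' : ∀ i, LipschitzOnWith L (Φ i) K := by
      intro i
      rw [hΦdef]
      exact hL i
    obtain ⟨B0, hB0⟩ : ∃ B0, ∀ x ∈ K, ‖(fun i => Φ i x : Fin d → ℝ)‖ ≤ B0 :=
      hKcomp.exists_bound_of_continuousOn
        ((continuousOn_pi.2 fun i => hΦcont i).mono hKE)
    set B : ℝ := max B0 0 with hBdef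
    have hB : ∀ i, ∀ x ∈ K, |Φ i x| ≤ B := by
      intro i x hx
      calc |Φ i x| ≤ ‖(fun i => Φ i x : Fin d → ℝ)‖ := by
            simpa using norm_le_pi_norm (fun i => Φ i x : Fin d → ℝ) i
      _ ≤ B0 := hB0 x hx
      _ ≤ B := le_max_left _ _
    have hBnn : 0 ≤ B := le_max_right _ _
    refine ⟨L + Real.toNNReal (B / δ), fun i => ?_⟩
    have hML : (L : ℝ) ≤ (L + Real.toNNReal (B / δ) : NNReal) := by
      push_cast; linarith [NNReal.coe_nonneg (Real.toNNReal (B / δ))]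
    have hMB : B / δ ≤ (L + Real.toNNReal (B / δ) : NNReal) := by
      push_cast
      rw [Real.coe_toNNReal _ (by positivity)]
      linarith [NNReal.coe_nonneg L]
    rw [lipschitzWith_iff_dist_le_mul]
    have key : ∀ x y, x ∈ S →
        dist (F i x) (F i y) ≤ (L + Real.toNNReal (B / δ) : NNReal) * dist x y := by
      intro x y hxS
      by_cases hyK : y ∈ K
      · have h1 := (lipschitzOnWith_iff_dist_le_mul.1 (hL' i)) x (hSK hxS) y hyK
        rw [hFE i x (hKE (hSK hxS)), hFE i y (hKE hyK)]
        calc dist (Φ i x) (Φ i y) ≤ L * dist x y := h1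
        _ ≤ _ := by gcongr
      · have hdist : δ ≤ dist x y := by
          by_contra hlt
          push_neg at hlt
          exact hyK (hKdef ▸ mem_cthickening_of_dist_le y x δ S hxS (by
            rw [dist_comm] at hlt; linarith))
        have hFy : F i y = 0 := hF0 i y (fun hyS => hyK (hSK hyS))
        rw [hFy, dist_zero_right, Real.norm_eq_abs, hFE i x (hSE hxS)]
        calc |Φ i x| ≤ B := hB i x (hSK hxS)
        _ = (B / δ) * δ := by field_simp
        _ ≤ (B / δ) * dist x y := by
            have : 0 ≤ B / δ := by positivity
            nlinarith
        _ ≤ _ := by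
            have h0 : (0:ℝ) ≤ dist x y := dist_nonneg
            nlinarith [hMB]
    intro x y
    by_cases hxS : x ∈ S
    · exact key x y hxS
    by_cases hyS : y ∈ S
    · rw [dist_comm, dist_comm x y]; exact key y x hyS
    · rw [hF0 i x hxS, hF0 i y hyS, dist_self]; positivity
  have hFsupp : ∀ i, HasCompactSupport (F i) :=
    fun i => HasCompactSupport.intro hu_comp (fun x hx => hF0 i x hx)
  have hFcont : ∀ i, Continuous (F i) := fun i => (hFlip i).continuous
  -- the cutoff function
  obtain ⟨χ, hχC, hχcomp, hχone, hχsupp⟩ :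
      ∃ χ : (Fin d → ℝ) → ℝ, ContDiff ℝ 1 χ ∧ HasCompactSupport χ ∧
        (∀ x ∈ thickening (δ/2) S, χ x = 1) ∧ tsupport χ ⊆ E := by
    obtain ⟨χ, hsm, hrange, h0, h1⟩ :=
      exists_contMDiff_zero_iff_one_iff_of_isClosed (modelWithCornersSelf ℝ (Fin d → ℝ)) (n := ⊤)
        (s := (thickening δ S)ᶜ) (t := cthickening (δ/2) S)
        isOpen_thickening.isClosed_compl (isClosed_cthickening)
        (Disjoint.mono_right (cthickening_subset_thickening' δpos (by linarith) S)
          disjoint_compl_left)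
    have hχC : ContDiff ℝ 1 χ := by
      have := contMDiff_iff_contDiff.1 hsm
      exact this.of_le (by exact_mod_cast le_top)
    have hsupp : tsupport χ ⊆ K := by
      have h2 : Function.support χ ⊆ thickening δ S := by
        intro y hy
        by_contra hmem
        exact hy ((h0 y).1 hmem)
      calc tsupport χ ⊆ closure (thickening δ S) := closure_mono h2
      _ ⊆ cthickening δ S := closure_thickening_subset_cthickening _ _
      _ = K := hKdef.symm
    refine ⟨χ, hχC, hKcomp.of_isClosed_subset isClosed_closure hsupp, ?_, hsupp.trans hKE⟩
    intro x hx
    exact (h1 x).1 (thickening_subset_cthickening _ _ hx)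
  -- the truncated test function
  set vt : (Fin d → ℝ) → ℝ := fun y => χ y * v y with hvtdef
  have hvtC1 : ContDiff ℝ 1 vt := by
    rw [contDiff_iff_contDiffAt]
    intro x
    by_cases hxE : x ∈ E
    · exact (hχC.contDiffAt).mul (hv.contDiffAt (hEopen.mem_nhds hxE))
    · have hχ0 : ∀ᶠ y in nhds x, vt y = 0 := by
        have hxsupp : x ∉ tsupport χ := fun h => hxE (hχsupp h)
        filter_upwards [(isClosed_tsupport χ).isOpen_compl.mem_nhds hxsupp] with y hy
        rw [hvtdef]
        simp [image_eq_zero_of_notMem_tsupport hy]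
      exact contDiffAt_const.congr_of_eventuallyEq hχ0
  have hvtcomp : HasCompactSupport vt := hχcomp.mul_right
  obtain ⟨D, hD⟩ : ∃ D : NNReal, LipschitzWith D vt :=
    hvtC1.lipschitzWith_of_hasCompactSupport hvtcomp one_ne_zero
  have hvtdiff : ∀ x, DifferentiableAt ℝ vt x := fun x =>
    (hvtC1.differentiable one_ne_zero).differentiableAt
  -- key pointwise identity A on each cell
  have keyA : ∀ (τ : Equiv.Perm (Fin d)), ∀ x ∈ cell E τ,
      (∑ i, ∑ j, fderiv ℝ u x (Pi.single i 1) * c x i j * fderiv ℝ v x (Pi.single j 1)) * p x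
        = ∑ j, lineDeriv ℝ vt x (Pi.single j 1) * F j x := by
    intro τ x hxτ
    have hxE : x ∈ E := hxτ.1
    by_cases hxS : x ∈ S
    case neg =>
      have hF0' : ∀ j, F j x = 0 := fun j => hF0 j x hxS
      simp [hF0', hdu0 x hxS]
    case pos =>
      have hN : x ∈ thickening (δ/2) S := self_subset_thickening (by linarith) S hxS
      have hvd : DifferentiableAt ℝ v x :=
        (hv.contDiffAt (hEopen.mem_nhds hxE)).differentiableAt one_ne_zero
      have hvtev : vt =ᶠ[nhds x] v := by
        filter_upwards [isOpen_thickening.mem_nhds hN] with y hy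
        rw [hvtdef]; simp [hχone y hy]
      have hld : ∀ j, lineDeriv ℝ vt x (Pi.single j 1) = fderiv ℝ v x (Pi.single j 1) := by
        intro j
        rw [lineDeriv_congr_nhds hvtev, hvd.lineDeriv_eq_fderiv]
      have hsym : ∀ a b, c x a b = c x b a := by
        intro a b
        have h := (hc_pos x hxE).isHermitian
        conv_lhs => rw [← h]
        simp [Matrix.conjTranspose_apply]
      have hFx : ∀ j, F j x = ∑ k, c x j k * fderiv ℝ u x (Pi.single k 1) * p x := by
        intro j
        rw [hFE j x hxE, hΦdef]
        exact Finset.sum_congr rfl fun k _ => by rw [hG_grad τ x hxτ k]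
      simp only [hld, hFx, Finset.sum_mul, Finset.mul_sum]
      rw [Finset.sum_comm]
      refine Finset.sum_congr rfl fun j _ => Finset.sum_congr rfl fun i _ => ?_
      rw [hsym i j]
      ring
  -- key pointwise identity B on each cell
  have keyB : ∀ (τ : Equiv.Perm (Fin d)), ∀ x ∈ cell E τ,
      ∑ j, lineDeriv ℝ (F j) x (Pi.single j 1) * vt x
        = 2 * (v x *
            ((∑ i, ((1 / 2 : ℝ) * (∑ j, fderiv ℝ (fun y => c y i j) x (Pi.single j 1))
                  + (1 / 2 : ℝ) * ∑ j, c x i j *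
                      fderiv ℝ (fun y => Real.log (p y)) x (Pi.single j 1))
                * fderiv ℝ u x (Pi.single i 1))
              + (1 / 2 : ℝ) * ∑ i, ∑ j, c x i j *
                  fderiv ℝ (fun y => fderiv ℝ u y (Pi.single j 1)) x (Pi.single i 1))
            * p x) := by
    intro τ x hxτ
    have hxE : x ∈ E := hxτ.1
    by_cases hxS : x ∈ S
    case neg =>
      have hl0 : ∀ j, lineDeriv ℝ (F j) x (Pi.single j 1) = 0 := fun j =>
        hFline0 j x hxS _
      have hdd0 : ∀ k, fderiv ℝ (fun y => fderiv ℝ u y (Pi.single k 1)) x = 0 := by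
        intro k
        have hev : (fun y => fderiv ℝ u y (Pi.single k 1)) =ᶠ[nhds x] (fun _ => (0:ℝ)) := by
          filter_upwards [hS_closed.isOpen_compl.mem_nhds hxS] with y hy
          rw [hdu0 y hy]; rfl
        rw [hev.fderiv_eq]; exact fderiv_const_apply 0
      simp [hl0, hdd0, hdu0 x hxS]
    case pos =>
      have hmem : cell E τ ∈ nhds x := (cell_isOpen hEopen τ).mem_nhds hxτ
      have hvtx : vt x = v x := by
        rw [hvtdef]
        simp [hχone x (self_subset_thickening (by linarith) S hxS)]
      have hcd : ∀ a b, DifferentiableAt ℝ (fun y => c y a b) x := fun a b =>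
        (((hc_C1 τ a b).differentiableOn one_ne_zero).differentiableAt hmem)
      have hpd : DifferentiableAt ℝ p x :=
        (((hp_C1 τ).differentiableOn one_ne_zero).differentiableAt hmem)
      have hfu : ContDiffOn ℝ 1 (fderiv ℝ u) (cell E τ) :=
        (hu_C2 τ).fderiv_of_isOpen (cell_isOpen hEopen τ) (by norm_num)
      have hgd : ∀ k, DifferentiableAt ℝ (fun y => fderiv ℝ u y (Pi.single k 1)) x := by
        intro k
        have h1 : DifferentiableAt ℝ (fderiv ℝ u) x :=
          (hfu.differentiableOn one_ne_zero).differentiableAt hmem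
        exact (ContinuousLinearMap.apply ℝ ℝ (Pi.single k 1)).differentiableAt.comp x h1
      have hGev : ∀ k, (fun y => G y k) =ᶠ[nhds x] (fun y => fderiv ℝ u y (Pi.single k 1)) := by
        intro k
        filter_upwards [hmem] with y hy using hG_grad τ y hy k
      have hGd : ∀ k, DifferentiableAt ℝ (fun y => G y k) x := fun k =>
        (hgd k).congr_of_eventuallyEq (hGev k)
      have hGfd : ∀ k, fderiv ℝ (fun y => G y k) x
          = fderiv ℝ (fun y => fderiv ℝ u y (Pi.single k 1)) x := fun k =>
        (hGev k).fderiv_eq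
      have hsym : ∀ a b, c x a b = c x b a := by
        intro a b
        have h := (hc_pos x hxE).isHermitian
        conv_lhs => rw [← h]
        simp [Matrix.conjTranspose_apply]
      have hsymF : ∀ a b, fderiv ℝ (fun y => c y a b) x = fderiv ℝ (fun y => c y b a) x := by
        intro a b
        apply Filter.EventuallyEq.fderiv_eq
        filter_upwards [hEopen.mem_nhds hxE] with y hy
        have h := (hc_pos y hy).isHermitian
        conv_lhs => rw [← h]
        simp [Matrix.conjTranspose_apply]
      have hlog : ∀ j, fderiv ℝ (fun y => Real.log (p y)) x (Pi.single j 1) * p x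
          = fderiv ℝ p x (Pi.single j 1) := by
        intro j
        have h1 : HasFDerivAt (fun y => Real.log (p y)) ((p x)⁻¹ • fderiv ℝ p x) x :=
          (Real.hasDerivAt_log (hp_pos x hxE).ne').comp_hasFDerivAt x hpd.hasFDerivAt
        rw [h1.fderiv]
        simp only [ContinuousLinearMap.smul_apply, smul_eq_mul]
        rw [inv_mul_eq_div, div_mul_cancel₀ _ (hp_pos x hxE).ne']
      have hstep : ∀ j, lineDeriv ℝ (F j) x (Pi.single j 1)
          = ∑ k, (c x j k * fderiv ℝ u x (Pi.single k 1) * fderiv ℝ p x (Pi.single j 1)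
              + p x * (c x j k * fderiv ℝ (fun y => fderiv ℝ u y (Pi.single k 1)) x (Pi.single j 1))
              + p x * (fderiv ℝ u x (Pi.single k 1) * fderiv ℝ (fun y => c y j k) x (Pi.single j 1))) := by
        intro j
        have hFev : F j =ᶠ[nhds x] Φ j := by
          filter_upwards [hEopen.mem_nhds hxE] with y hy using hFE j y hy
        rw [lineDeriv_congr_nhds hFev, hΦdef]
        have hdiff : ∀ k : Fin d, DifferentiableAt ℝ (fun y => c y j k * G y k * p y) x :=
          fun k => ((hcd j k).mul (hGd k)).mul hpd
        have hΦd : DifferentiableAt ℝ (fun y => ∑ k, c y j k * G y k * p y) x :=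
          DifferentiableAt.fun_sum (fun k _ => hdiff k)
        rw [hΦd.lineDeriv_eq_fderiv]
        rw [fderiv_fun_sum (fun k _ => hdiff k)]
        rw [ContinuousLinearMap.sum_apply]
        refine Finset.sum_congr rfl fun k _ => ?_
        rw [fderiv_fun_mul (c := fun y => c y j k * G y k) ((hcd j k).mul (hGd k)) hpd]
        rw [fderiv_fun_mul (hcd j k) (hGd k)]
        simp only [ContinuousLinearMap.add_apply, ContinuousLinearMap.smul_apply, smul_eq_mul]
        rw [hGfd k]
        rw [hG_grad τ x hxτ k]
        ring
      have hlog' : ∀ j, fderiv ℝ (fun y => Real.log (p y)) x (Pi.single j 1)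
          = fderiv ℝ p x (Pi.single j 1) / p x := by
        intro j
        rw [← hlog j, mul_div_cancel_right₀ _ (hp_pos x hxE).ne']
      simp only [hstep, hvtx, hlog']
      rw [← Finset.sum_mul]
      have halg := alg_identity (p x) (hp_pos x hxE).ne'
        (fun a b => c x a b)
        (fun a b => fderiv ℝ (fun y => fderiv ℝ u y (Pi.single b 1)) x (Pi.single a 1))
        (fun dir a b => fderiv ℝ (fun y => c y a b) x (Pi.single dir 1))
        (fun k => fderiv ℝ u x (Pi.single k 1))
        (fun j => fderiv ℝ p x (Pi.single j 1))
        hsym (fun dir a b => by rw [hsymF a b])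
      rw [halg]
      ring
  -- now the integral computation
  have hEmeas : MeasurableSet E := hEopen.measurableSet
  have hae : ∀ᵐ x : (Fin d → ℝ), Function.Injective x := ae_iff.mpr measure_noninj
  have hvt_fd : ∀ j, Continuous fun x => lineDeriv ℝ vt x (Pi.single j 1) := by
    intro j
    have heq : (fun x => lineDeriv ℝ vt x (Pi.single j 1))
        = fun x => fderiv ℝ vt x (Pi.single j 1) :=
      funext fun x => (hvtdiff x).lineDeriv_eq_fderiv
    rw [heq]
    exact (hvtC1.continuous_fderiv one_ne_zero).clm_apply continuous_const
  have hint1 : ∀ j, Integrable (fun x => lineDeriv ℝ vt x (Pi.single j 1) * F j x) volume :=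
    fun j => Continuous.integrable_of_hasCompactSupport ((hvt_fd j).mul (hFcont j))
      ((hFsupp j).mul_left)
  have hint2 : ∀ j, Integrable (fun x => lineDeriv ℝ (F j) x (Pi.single j 1) * vt x) volume := by
    intro j
    refine Integrable.bdd_mul (c := M * ‖(Pi.single j 1 : Fin d → ℝ)‖)
      (hvtC1.continuous.integrable_of_hasCompactSupport hvtcomp)
      ((hFlip j).memLp_lineDeriv (Pi.single j 1)).aestronglyMeasurable ?_
    exact Filter.Eventually.of_forall fun x => norm_lineDeriv_le_of_lipschitz ℝ (hFlip j)
  -- chain of equalities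
  have hA1 : ∫ x in E, (∑ i, ∑ j,
      fderiv ℝ u x (Pi.single i 1) * c x i j * fderiv ℝ v x (Pi.single j 1)) * p x
      = ∫ x in E, ∑ j, lineDeriv ℝ vt x (Pi.single j 1) * F j x := by
    refine setIntegral_congr_ae hEmeas ?_
    filter_upwards [hae] with x hinj hxE
    obtain ⟨τ, hτ⟩ := exists_cell_mem hxE hinj
    exact keyA τ x hτ
  have hA2 : ∫ x in E, ∑ j, lineDeriv ℝ vt x (Pi.single j 1) * F j x
      = ∑ j, ∫ x in E, lineDeriv ℝ vt x (Pi.single j 1) * F j x :=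
    integral_finset_sum _ fun j _ => (hint1 j).integrableOn
  have hA3 : ∀ j, ∫ x in E, lineDeriv ℝ vt x (Pi.single j 1) * F j x
      = ∫ x, lineDeriv ℝ vt x (Pi.single j 1) * F j x := by
    intro j
    refine setIntegral_eq_integral_of_forall_compl_eq_zero fun x hx => ?_
    rw [hFdef]
    simp [Set.indicator_of_notMem hx]
  have hibp : ∀ j, (∫ x, lineDeriv ℝ vt x (Pi.single j 1) * F j x)
      = - ∫ x, lineDeriv ℝ (F j) x (Pi.single j 1) * vt x := by
    intro j
    have h1 := (hFlip j).integral_lineDeriv_mul_eq (μ := volume) hD hvtcomp (Pi.single j 1)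
    have h2 : ∀ x, lineDeriv ℝ vt x (-(Pi.single j 1)) = - lineDeriv ℝ vt x (Pi.single j 1) := by
      intro x
      rw [(hvtdiff x).lineDeriv_eq_fderiv, (hvtdiff x).lineDeriv_eq_fderiv, map_neg]
    rw [h1]
    simp only [h2, neg_mul]
    rw [integral_neg, neg_neg]
  have hB1 : ∀ j, ∫ x, lineDeriv ℝ (F j) x (Pi.single j 1) * vt x
      = ∫ x in E, lineDeriv ℝ (F j) x (Pi.single j 1) * vt x := by
    intro j
    refine (setIntegral_eq_integral_of_forall_compl_eq_zero fun x hx => ?_).symm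
    rw [hFline0 j x (fun hxS => hx (hSE hxS)), zero_mul]
  have hB2 : ∑ j, ∫ x in E, lineDeriv ℝ (F j) x (Pi.single j 1) * vt x
      = ∫ x in E, ∑ j, lineDeriv ℝ (F j) x (Pi.single j 1) * vt x :=
    (integral_finset_sum _ fun j _ => (hint2 j).integrableOn).symm
  have hB3 : ∫ x in E, ∑ j, lineDeriv ℝ (F j) x (Pi.single j 1) * vt x
      = ∫ x in E, 2 * (v x *
            ((∑ i, ((1 / 2 : ℝ) * (∑ j, fderiv ℝ (fun y => c y i j) x (Pi.single j 1))
                  + (1 / 2 : ℝ) * ∑ j, c x i j *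
                      fderiv ℝ (fun y => Real.log (p y)) x (Pi.single j 1))
                * fderiv ℝ u x (Pi.single i 1))
              + (1 / 2 : ℝ) * ∑ i, ∑ j, c x i j *
                  fderiv ℝ (fun y => fderiv ℝ u y (Pi.single j 1)) x (Pi.single i 1))
            * p x) := by
    refine setIntegral_congr_ae hEmeas ?_
    filter_upwards [hae] with x hinj hxE
    obtain ⟨τ, hτ⟩ := exists_cell_mem hxE hinj
    exact keyB τ x hτ
  rw [hA1, hA2]
  simp only [hA3, hibp]
  simp only [hB1]
  rw [Finset.sum_neg_distrib, hB2, hB3, integral_const_mul]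
  ring
end

section
/- Let E be a topological space equipped with its Borel σ-algebra, and let μ be a σ-finite Borel measure on E such that μ(U) > 0 for every nonempty open set U ⊆ E. Let κ be a sub-Markov kernel from E to E (i.e., κ(x,·) is a Borel measure with κ(x,E) ≤ 1 for each x, measurably in x) satisfying: (i) symmetry with respect to μ: for all bounded nonnegative Borel functions f, g on E, ∫_E f(x) (∫_E g(y) κ(x,dy)) μ(dx) = ∫_E (∫_E f(y) κ(x,dy)) g(x) μ(dx); and (ii) strong Feller property: for every bounded Borel function f on E, the map x ↦ ∫_E f(y) κ(x,dy) is continuous on E. Then κ(x,·) is absolutely continuous with respect to μ for every x ∈ E; that is, for every Borel set N ⊆ E with μ(N) = 0 one has κ(x,N) = 0 for every x ∈ E. -/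
open MeasureTheory
open scoped ENNReal NNReal

/-- **Absolute continuity of a symmetric strong Feller sub-Markov kernel
(Corollary 3.2):** if `κ` is a sub-Markov kernel, symmetric with respect to a
σ-finite measure `μ` charging every nonempty open set, and `κ` is strong
Feller, then `κ(x, ·) ≪ μ` for every `x`. -/
theorem stmt_4 {E : Type*} [TopologicalSpace E] [MeasurableSpace E] [BorelSpace E]
    (μ : Measure E) [SigmaFinite μ]
    (hμ_pos : ∀ U : Set E, IsOpen U → U.Nonempty → 0 < μ U)
    -- a sub-Markov kernel κ
    (κ : E → Measure E)
    (hκ_meas : ∀ s : Set E, MeasurableSet s → Measurable fun x => κ x s)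
    (hκ_sub : ∀ x, κ x Set.univ ≤ 1)
    -- (i) symmetry with respect to μ
    (hsymm : ∀ f g : E → ℝ≥0∞, Measurable f → Measurable g →
      (∃ C : ℝ≥0, ∀ x, f x ≤ C) → (∃ C : ℝ≥0, ∀ x, g x ≤ C) →
      ∫⁻ x, f x * ∫⁻ y, g y ∂(κ x) ∂μ = ∫⁻ x, (∫⁻ y, f y ∂(κ x)) * g x ∂μ)
    -- (ii) strong Feller property
    (hfeller : ∀ f : E → ℝ, Measurable f → (∃ C : ℝ, ∀ x, |f x| ≤ C) →
      Continuous fun x => ∫ y, f y ∂(κ x)) :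
    ∀ N : Set E, MeasurableSet N → μ N = 0 → ∀ x : E, κ x N = 0 := by
  intro N hN hμN x₀
  have hfin : ∀ x, κ x N ≠ ∞ := fun x =>
    ne_top_of_le_ne_top (by simp : (1:ℝ≥0∞) ≠ ∞)
      ((measure_mono (Set.subset_univ N)).trans (hκ_sub x))
  -- the continuous function x ↦ (κ x N).toReal
  have hgc : Continuous fun x => (κ x N).toReal := by
    have h := hfeller (N.indicator fun _ => (1:ℝ))
      (measurable_const.indicator hN)
      ⟨1, fun x => by by_cases hx : x ∈ N <;> simp [Set.indicator, hx]⟩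
    have heq : (fun x => ∫ y, N.indicator (fun _ => (1:ℝ)) y ∂(κ x))
        = fun x => (κ x N).toReal := by
      funext x
      exact integral_indicator_one (μ := κ x) hN
    rwa [heq] at h
  -- symmetry gives ∫⁻ κ x N ∂μ = 0
  have hsym := hsymm (N.indicator 1) 1 (measurable_one.indicator hN) measurable_one
    ⟨1, fun x => by by_cases hx : x ∈ N <;> simp [Set.indicator, hx]⟩
    ⟨1, fun _ => le_refl _⟩
  have hL : ∫⁻ x, N.indicator 1 x * ∫⁻ y, (1:E → ℝ≥0∞) y ∂(κ x) ∂μ = 0 := by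
    refine le_antisymm ?_ zero_le
    calc ∫⁻ x, N.indicator 1 x * ∫⁻ y, (1:E → ℝ≥0∞) y ∂(κ x) ∂μ
        ≤ ∫⁻ x, N.indicator 1 x ∂μ := by
          refine lintegral_mono fun x => ?_
          have h1 : ∫⁻ y, (1:E → ℝ≥0∞) y ∂(κ x) ≤ 1 := by simpa using hκ_sub x
          calc N.indicator 1 x * ∫⁻ y, (1:E → ℝ≥0∞) y ∂(κ x)
              ≤ N.indicator 1 x * 1 := mul_le_mul_right h1 _
            _ = N.indicator 1 x := mul_one _
      _ = μ N := by rw [lintegral_indicator hN]; simp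
      _ = 0 := hμN
  have hR : ∫⁻ x, κ x N ∂μ = 0 := by
    have heq : (fun x => (∫⁻ y, N.indicator 1 y ∂(κ x)) * (1:E → ℝ≥0∞) x)
        = fun x => κ x N := by
      funext x
      rw [lintegral_indicator hN]
      simp
    rw [hsym, heq] at hL
    exact hL
  have hae : (fun x => κ x N) =ᵐ[μ] 0 :=
    (lintegral_eq_zero_iff (hκ_meas N hN)).mp hR
  -- so the continuous function vanishes a.e., hence everywhere
  have hae' : μ {x | (κ x N).toReal ≠ 0} = 0 := by
    refine measure_mono_null ?_ (ae_iff.mp hae)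
    intro x hx
    simp only [Set.mem_setOf_eq] at hx ⊢
    intro h
    exact hx (by simp [h])
  by_contra hne
  have hx₀ : (κ x₀ N).toReal ≠ 0 := by
    simp [ENNReal.toReal_eq_zero_iff, hne, hfin x₀]
  have hU : IsOpen {x | (κ x N).toReal ≠ 0} := by
    have : {x | (κ x N).toReal ≠ 0} = (fun x => (κ x N).toReal) ⁻¹' ({0}ᶜ) := rfl
    rw [this]
    exact (isClosed_singleton.preimage hgc).isOpen_compl
  have := hμ_pos _ hU ⟨x₀, hx₀⟩
  rw [hae'] at this
  exact lt_irrefl _ this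
end

section
/- Let d ≥ 3, let i, j, k ∈ {1,…,d} be distinct indices, let n ≥ 1 be an integer, and let ε > 0. Let A := {x ∈ ℝ^d : |x_l| ≤ 2n for all l ∈ {1,…,d}, ε ≤ |x_i − x_j| ≤ ε(1+ε), and |x_k − x_i| ≤ ε(1+ε)}. Then ∫_A |x_i − x_j|^{−2} dx ≤ 2^{2d−2} n^{d−2} ε, where the integral is with respect to Lebesgue measure on ℝ^d. -/
open MeasureTheory ENNReal

theorem lintegral_pi_prod {m : ℕ} (f : Fin m → ℝ → ℝ≥0∞) (hf : ∀ i, Measurable (f i)) :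
    ∫⁻ x : Fin m → ℝ, ∏ i, f i (x i) = ∏ i, ∫⁻ t, f i t := by
  induction m with
  | zero => simp [volume_pi, Measure.pi_empty_univ]
  | succ m ih =>
    have h0 := (measurePreserving_piFinSuccAbove (fun _ : Fin (m+1) => (volume : Measure ℝ)) 0).symm
    have hmeas : Measurable fun y : Fin m → ℝ => ∏ i : Fin m, f i.succ (y i) :=
      Finset.measurable_prod _ fun i _ => (hf _).comp (measurable_pi_apply i)
    calc ∫⁻ x : Fin (m+1) → ℝ, ∏ i, f i (x i)
        = ∫⁻ p : ℝ × (Fin m → ℝ), f 0 p.1 * ∏ i : Fin m, f i.succ (p.2 i)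
            ∂((volume : Measure ℝ).prod (Measure.pi fun _ => (volume : Measure ℝ))) := by
          rw [volume_pi, ← h0.lintegral_comp_emb (MeasurableEquiv.measurableEmbedding _)]
          refine lintegral_congr fun p => ?_
          rw [Fin.prod_univ_succ]
          simp [MeasurableEquiv.piFinSuccAbove_symm_apply, Fin.insertNth_zero]
      _ = (∫⁻ t, f 0 t) * ∏ i : Fin m, ∫⁻ t, f i.succ t := by
          rw [lintegral_prod_mul (hf 0).aemeasurable hmeas.aemeasurable,
            ← volume_pi, ih (fun i => f i.succ) (fun i => hf _)]
      _ = ∏ i, ∫⁻ t, f i t := by rw [Fin.prod_univ_succ]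

theorem lintegral_Icc_inv_sq {a b : ℝ} (h0 : (0:ℝ) ∉ Set.uIcc a b) (hab : a ≤ b) :
    ∫⁻ t in Set.Icc a b, ENNReal.ofReal ((t ^ 2)⁻¹) = ENNReal.ofReal (a⁻¹ - b⁻¹) := by
  have hne : ∀ t ∈ Set.Icc a b, t ≠ 0 := by
    intro t ht h
    exact h0 (by simpa [h] using Set.Icc_subset_uIcc ht)
  have hcont : ContinuousOn (fun t : ℝ => (t ^ 2)⁻¹) (Set.Icc a b) := by
    refine ContinuousOn.inv₀ (by fun_prop) fun t ht => pow_ne_zero _ (hne t ht)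
  have hint : IntegrableOn (fun t : ℝ => (t ^ 2)⁻¹) (Set.Icc a b) :=
    hcont.integrableOn_compact isCompact_Icc
  rw [← ofReal_integral_eq_lintegral_ofReal hint
    (Filter.Eventually.of_forall fun t => by positivity)]
  congr 1
  have h2 : ∫ t in Set.Icc a b, (t ^ 2)⁻¹ = ∫ t in a..b, t ^ (-2 : ℤ) := by
    rw [MeasureTheory.integral_Icc_eq_integral_Ioc, ← intervalIntegral.integral_of_le hab]
    refine intervalIntegral.integral_congr fun t ht => ?_
    rw [zpow_neg, zpow_two]
    ring_nf
  rw [h2, integral_zpow (Or.inr ⟨by norm_num, h0⟩)]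
  norm_num
  ring

/-- **Integral estimate from the proof of Lemma 4.3:** for distinct indices
`i, j, k`, `n ≥ 1` and `ε > 0`,
`∫_A |x_i − x_j|⁻² dx ≤ 2^{2d−2} n^{d−2} ε`, where
`A = {|x_l| ≤ 2n ∀l} ∩ {ε ≤ |x_i − x_j| ≤ ε(1+ε)} ∩ {|x_k − x_i| ≤ ε(1+ε)}`. -/
theorem stmt_6 {d : ℕ} (hd : 3 ≤ d)
    (i j k : Fin d) (hij : i ≠ j) (hik : i ≠ k) (hjk : j ≠ k)
    (n : ℕ) (hn : 1 ≤ n) (ε : ℝ) (hε : 0 < ε) :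
    ∫⁻ x in {x : Fin d → ℝ | (∀ l, |x l| ≤ 2 * n) ∧
        ε ≤ |x i - x j| ∧ |x i - x j| ≤ ε * (1 + ε) ∧ |x k - x i| ≤ ε * (1 + ε)},
        ENNReal.ofReal (|x i - x j| ^ (-2 : ℤ))
      ≤ ENNReal.ofReal ((2 : ℝ) ^ (2 * d - 2) * (n : ℝ) ^ (d - 2) * ε) := by
  classical
  set E : ℝ := ε * (1 + ε) with hEdef
  have hE0 : 0 < E := by positivity
  have hεE : ε ≤ E := by nlinarith
  -- the shear map
  set M : Matrix (Fin d) (Fin d) ℝ :=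
      Matrix.transvection j i (-1) * Matrix.transvection k i (-1) with hMdef
  set T : (Fin d → ℝ) →ₗ[ℝ] (Fin d → ℝ) := Matrix.toLin' M with hTdef
  have hTdet : LinearMap.det T = 1 := by
    rw [hTdef, LinearMap.det_toLin', hMdef, Matrix.det_mul,
      Matrix.det_transvection_of_ne _ _ (Ne.symm hij) (-1),
      Matrix.det_transvection_of_ne _ _ (Ne.symm hik) (-1), mul_one]
  have hmap : Measure.map (⇑T) (volume : Measure (Fin d → ℝ)) = volume := by
    rw [Measure.map_linearMap_addHaar_eq_smul_addHaar _ (by rw [hTdet]; norm_num), hTdet]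
    simp
  have hTmeas : Measurable (⇑T) := T.continuous_of_finiteDimensional.measurable
  -- formula for T
  have htv : ∀ (a b : Fin d) (y : Fin d → ℝ),
      (Matrix.transvection a b (-1 : ℝ)).mulVec y = fun l => y l - (if l = a then y b else 0) := by
    intro a b y
    rw [Matrix.transvection, Matrix.add_mulVec, Matrix.one_mulVec, Matrix.single_mulVec]
    ext l
    by_cases h : l = a <;> simp [h, Function.update, sub_eq_add_neg]
  have hTapply : ∀ (x : Fin d → ℝ) (l : Fin d),
      T x l = x l - (if l = j ∨ l = k then x i else 0) := by
    intro x l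
    have : T x = (Matrix.transvection j i (-1 : ℝ)).mulVec
        ((Matrix.transvection k i (-1 : ℝ)).mulVec x) := by
      rw [hTdef, Matrix.toLin'_apply, hMdef, ← Matrix.mulVec_mulVec]
    rw [this, htv, htv]
    have hik' : ¬ (i = k) := hik
    by_cases hlj : l = j
    · have : ¬ (l = k) := by rw [hlj]; exact hjk
      simp [hlj, this, hjk, hik', Ne.symm hjk]
    · by_cases hlk : l = k <;> simp [hlj, hlk, Ne.symm hjk]
  -- the product sets and functions
  set Sj : Set ℝ := Set.Icc (-E) (-ε) ∪ Set.Icc ε E with hSjdef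
  have hSjmem : ∀ t : ℝ, t ∈ Sj ↔ ε ≤ |t| ∧ |t| ≤ E := by
    intro t
    rw [hSjdef]
    simp only [Set.mem_union, Set.mem_Icc, le_abs, abs_le]
    constructor
    · rintro (⟨h1, h2⟩ | ⟨h1, h2⟩)
      · exact ⟨Or.inr (by linarith), by constructor <;> linarith⟩
      · exact ⟨Or.inl h1, by constructor <;> linarith⟩
    · rintro ⟨h1 | h1, h2, h3⟩
      · right; exact ⟨h1, h3⟩
      · left; constructor <;> linarith
  set S : Fin d → Set ℝ := fun l =>
    if l = j then Sj
    else if l = k then Set.Icc (-E) E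
    else Set.Icc (-(2*(n:ℝ))) (2*(n:ℝ)) with hSdef
  have hSj' : S j = Sj := by simp [hSdef]
  have hSk' : S k = Set.Icc (-E) E := by simp [hSdef, Ne.symm hjk]
  have hSo : ∀ l, l ≠ j → l ≠ k → S l = Set.Icc (-(2*(n:ℝ))) (2*(n:ℝ)) := by
    intro l h1 h2
    simp [hSdef, h1, h2]
  have hSmeas : ∀ l, MeasurableSet (S l) := by
    intro l
    by_cases h1 : l = j
    · rw [h1, hSj']
      exact measurableSet_Icc.union measurableSet_Icc
    · by_cases h2 : l = k
      · rw [h2, hSk']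
        exact measurableSet_Icc
      · rw [hSo l h1 h2]
        exact measurableSet_Icc
  set g : Fin d → ℝ → ℝ≥0∞ := fun l t =>
    if l = j then (S l).indicator (fun t => ENNReal.ofReal ((t^2)⁻¹)) t
    else (S l).indicator 1 t with hgdef
  have hgj : ∀ t, g j t = Sj.indicator (fun t => ENNReal.ofReal ((t^2)⁻¹)) t := by
    intro t
    simp [hgdef, hSj']
  have hgo : ∀ l, l ≠ j → ∀ t, g l t = (S l).indicator 1 t := by
    intro l h1 t
    simp [hgdef, h1]
  have hg : ∀ l, Measurable (g l) := by
    intro l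
    by_cases h1 : l = j
    · subst h1
      have : g l = fun t => Sj.indicator (fun t => ENNReal.ofReal ((t^2)⁻¹)) t := funext (hgj)
      rw [this]
      exact (ENNReal.measurable_ofReal.comp ((measurable_id.pow_const 2).inv)).indicator
        ((hSj' ▸ hSmeas l))
    · have : g l = fun t => (S l).indicator 1 t := funext (hgo l h1)
      rw [this]
      exact measurable_one.indicator (hSmeas l)
  have hF : Measurable fun y : Fin d → ℝ => ∏ l, g l (y l) :=
    Finset.measurable_prod _ fun l _ => (hg l).comp (measurable_pi_apply l)
  set A : Set (Fin d → ℝ) := {x : Fin d → ℝ | (∀ l, |x l| ≤ 2 * n) ∧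
        ε ≤ |x i - x j| ∧ |x i - x j| ≤ ε * (1 + ε) ∧ |x k - x i| ≤ ε * (1 + ε)} with hAdef
  -- pointwise bound on A
  have hpoint : ∀ x ∈ A, ENNReal.ofReal (|x i - x j| ^ (-2 : ℤ))
      ≤ ∏ l, g l (T x l) := by
    intro x hx
    obtain ⟨hbound, h1, h2, h3⟩ := hx
    have habs : |x j - x i| = |x i - x j| := abs_sub_comm _ _
    have hfactor : ∀ l, l ≠ j → g l (T x l) = 1 := by
      intro l hlj
      rw [hgo l hlj]
      by_cases hlk : l = k
      · subst hlk
        have hT : T x l = x l - x i := by rw [hTapply]; simp [hlj]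
        rw [Set.indicator_of_mem]
        · rfl
        · rw [hSk', hT]
          exact Set.mem_Icc.2 (abs_le.1 h3)
      · have hT : T x l = x l := by rw [hTapply]; simp [hlj, hlk]
        rw [Set.indicator_of_mem]
        · rfl
        · rw [hSo l hlj hlk, hT]
          exact Set.mem_Icc.2 (abs_le.1 (hbound l))
    have hTj : T x j = x j - x i := by rw [hTapply]; simp
    have hjmem : T x j ∈ Sj := by
      rw [hSjmem, hTj, habs]
      exact ⟨h1, h2⟩
    have hjval : g j (T x j) = ENNReal.ofReal (|x i - x j| ^ (-2 : ℤ)) := by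
      rw [hgj, Set.indicator_of_mem hjmem]
      congr 1
      rw [hTj, zpow_neg, zpow_two, ← abs_mul, abs_mul_self]
      congr 1
      ring
    calc ENNReal.ofReal (|x i - x j| ^ (-2 : ℤ))
        = g j (T x j) * ∏ l ∈ Finset.univ.erase j, g l (T x l) := by
          rw [hjval, Finset.prod_eq_one (fun l hl => hfactor l (Finset.mem_erase.1 hl).1), mul_one]
      _ = ∏ l, g l (T x l) :=
          Finset.mul_prod_erase Finset.univ (fun l => g l (T x l)) (Finset.mem_univ j)
      _ ≤ ∏ l, g l (T x l) := le_rfl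
  -- main chain
  calc ∫⁻ x in A, ENNReal.ofReal (|x i - x j| ^ (-2 : ℤ))
      ≤ ∫⁻ x in A, ∏ l, g l (T x l) :=
        setLIntegral_mono (hF.comp hTmeas) hpoint
    _ ≤ ∫⁻ x, ∏ l, g l (T x l) := setLIntegral_le_lintegral _ _
    _ = ∫⁻ y : Fin d → ℝ, ∏ l, g l (y l) := by
        rw [← lintegral_map hF hTmeas, hmap]
    _ = ∏ l, ∫⁻ t, g l t := lintegral_pi_prod g hg
    _ ≤ ENNReal.ofReal ((2 : ℝ) ^ (2 * d - 2) * (n : ℝ) ^ (d - 2) * ε) := by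
        have hinv : E⁻¹ ≤ ε⁻¹ := by gcongr
        have hval : (0:ℝ) ≤ ε⁻¹ - E⁻¹ := by linarith
        -- value of the j factor
        have hIj : ∫⁻ t, g j t = ENNReal.ofReal (2 * (ε⁻¹ - E⁻¹)) := by
          have hdisj : Disjoint (Set.Icc (-E) (-ε)) (Set.Icc ε E) := by
            rw [Set.disjoint_left]
            rintro t ⟨_, ht2⟩ ⟨ht3, _⟩
            linarith
          calc ∫⁻ t, g j t
              = ∫⁻ t in Sj, ENNReal.ofReal ((t^2)⁻¹) := by
                simp_rw [hgj]
                rw [lintegral_indicator (hSj' ▸ hSmeas j)]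
            _ = (∫⁻ t in Set.Icc (-E) (-ε), ENNReal.ofReal ((t^2)⁻¹))
                + ∫⁻ t in Set.Icc ε E, ENNReal.ofReal ((t^2)⁻¹) := by
                rw [hSjdef, lintegral_union measurableSet_Icc hdisj]
            _ = ENNReal.ofReal ((-E)⁻¹ - (-ε)⁻¹) + ENNReal.ofReal (ε⁻¹ - E⁻¹) := by
                rw [lintegral_Icc_inv_sq (Set.notMem_uIcc_of_gt (by linarith) (by linarith))
                    (by linarith),
                  lintegral_Icc_inv_sq (Set.notMem_uIcc_of_lt hε (by linarith)) hεE]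
            _ = ENNReal.ofReal (2 * (ε⁻¹ - E⁻¹)) := by
                rw [inv_neg, inv_neg, ← ENNReal.ofReal_add (by linarith) hval]
                congr 1
                ring
        have hIk : ∫⁻ t, g k t = ENNReal.ofReal (2 * E) := by
          simp_rw [hgo k (Ne.symm hjk)]
          rw [lintegral_indicator_one (hSmeas k), hSk', Real.volume_Icc]
          congr 1
          ring
        have hIo : ∀ l, l ≠ j → l ≠ k → ∫⁻ t, g l t = ENNReal.ofReal (4 * (n:ℝ)) := by
          intro l h1 h2
          simp_rw [hgo l h1]
          rw [lintegral_indicator_one (hSmeas l), hSo l h1 h2, Real.volume_Icc]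
          congr 1
          ring
        have hkmem : k ∈ Finset.univ.erase j := Finset.mem_erase.2 ⟨Ne.symm hjk, Finset.mem_univ k⟩
        have hcard : ((Finset.univ.erase j).erase k).card = d - 2 := by
          rw [Finset.card_erase_of_mem hkmem, Finset.card_erase_of_mem (Finset.mem_univ j),
            Finset.card_univ, Fintype.card_fin]
          omega
        rw [← Finset.mul_prod_erase Finset.univ _ (Finset.mem_univ j),
          ← Finset.mul_prod_erase _ _ hkmem,
          Finset.prod_congr rfl (fun l hl => hIo l (Finset.mem_erase.1 (Finset.mem_of_mem_erase hl)).1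
            (Finset.mem_erase.1 hl).1),
          Finset.prod_const, hcard, hIj, hIk]
        set m : ℕ := d - 2 with hm
        rw [← ENNReal.ofReal_pow (by positivity), ← ENNReal.ofReal_mul (by positivity),
          ← ENNReal.ofReal_mul (by positivity)]
        apply ENNReal.ofReal_le_ofReal
        have hexp : 2 * d - 2 = 2 * m + 2 := by omega
        have key : (ε⁻¹ - E⁻¹) * E = ε := by
          rw [hEdef]
          field_simp
          ring
        have h2 : 2 * (ε⁻¹ - E⁻¹) * (2 * E * (4 * (n:ℝ)) ^ m)
            = 4 * ((ε⁻¹ - E⁻¹) * E) * (4 * (n:ℝ)) ^ m := by ring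
        rw [h2, key, hexp, show (2:ℝ)^(2*m+2) = 4 * 4^m by rw [pow_add, pow_mul]; norm_num; ring,
          mul_pow]
        exact le_of_eq (by ring)
end

section
/- Let d ≥ 2, let Δ := {x ∈ (0,1)^d : x_1 + … + x_d = 1} be the open unit simplex, and let ς denote the (d−1)-dimensional Hausdorff measure on ℝ^d restricted to Δ. For each permutation τ of {1,…,d} let Δ_τ := {x ∈ Δ : x_{τ(1)} > … > x_{τ(d)}}. Let c : Δ → 𝕊^d (symmetric d×d real matrices) and p : Δ → [0,∞) be Borel measurable with c_{ii}(x) ≥ 0 for all i and x. Assume that for every permutation τ, ∫_{Δ_τ} c_{τ(d)τ(d)}(x) · x_{τ(d)}^{−2} · p(x) dς(x) < ∞. For x ∈ Δ whose minimal coordinate is attained at a unique index, let i(x) denote that index. Then lim_{n→∞} n² ∫_{{x ∈ Δ : 1/n < min_l x_l < 2/n, the minimum is attained at a unique index}} c_{i(x)i(x)}(x) p(x) dς(x) = 0. -/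
open MeasureTheory Filter
open scoped ENNReal
open scoped NNReal

/-- The open unit simplex `Δ = {x ∈ (0,1)^d : Σ x_i = 1}`. -/
def simplex (d : ℕ) : Set (Fin d → ℝ) :=
  {x | (∀ l, x l ∈ Set.Ioo (0 : ℝ) 1) ∧ ∑ l, x l = 1}

/-- The ordered cell `Δ_τ = {x ∈ Δ : x_{τ(1)} > ⋯ > x_{τ(d)}}`. -/
def simplexCell {d : ℕ} (τ : Equiv.Perm (Fin d)) : Set (Fin d → ℝ) :=
  {x ∈ simplex d | StrictAnti fun k => x (τ k)}

lemma measurableSet_simplex (d : ℕ) : MeasurableSet (simplex d) := by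
  have h1 : MeasurableSet {x : Fin d → ℝ | ∀ l, x l ∈ Set.Ioo (0:ℝ) 1} := by
    rw [Set.setOf_forall]
    exact MeasurableSet.iInter fun l => (measurable_pi_apply l) measurableSet_Ioo
  have h2 : MeasurableSet {x : Fin d → ℝ | ∑ l, x l = 1} :=
    (Finset.measurable_sum Finset.univ fun l _ => measurable_pi_apply l)
      (measurableSet_singleton (1:ℝ))
  exact h1.inter h2

lemma measurableSet_cell {d : ℕ} (τ : Equiv.Perm (Fin d)) :
    MeasurableSet (simplexCell τ) := by
  have : simplexCell τ =
      simplex d ∩ ⋂ (a : Fin d), ⋂ (b : Fin d), {x | a < b → x (τ b) < x (τ a)} := by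
    ext x
    simp [simplexCell, StrictAnti, Set.mem_iInter]
  rw [this]
  refine (measurableSet_simplex d).inter
    (MeasurableSet.iInter fun a => MeasurableSet.iInter fun b => ?_)
  by_cases hab : a < b
  · simp only [hab, true_implies]
    exact measurableSet_lt (measurable_pi_apply _) (measurable_pi_apply _)
  · simp only [hab, false_implies]
    simp

lemma measurableSet_region {d : ℕ} (n : ℕ) (l : Fin d) :
    MeasurableSet {x ∈ simplex d |
      (∀ m, m ≠ l → x l < x m) ∧ 1 / (n : ℝ) < x l ∧ x l < 2 / (n : ℝ)} := by
  have h1 : MeasurableSet {x : Fin d → ℝ | ∀ m, m ≠ l → x l < x m} := by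
    rw [Set.setOf_forall]
    refine MeasurableSet.iInter fun m => ?_
    by_cases hm : m = l
    · simp only [hm]
      simp
    · simp only [hm, ne_eq, not_false_eq_true, true_implies]
      exact measurableSet_lt (measurable_pi_apply _) (measurable_pi_apply _)
  have h2 : MeasurableSet {x : Fin d → ℝ | 1 / (n:ℝ) < x l} :=
    measurableSet_lt measurable_const (measurable_pi_apply _)
  have h3 : MeasurableSet {x : Fin d → ℝ | x l < 2 / (n:ℝ)} :=
    measurableSet_lt (measurable_pi_apply _) measurable_const
  exact (measurableSet_simplex d).inter (h1.inter (h2.inter h3))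

lemma exists_perm_strictAnti {d : ℕ} {x : Fin d → ℝ} (hx : Function.Injective x) :
    ∃ τ : Equiv.Perm (Fin d), StrictAnti fun k => x (τ k) := by
  classical
  set g : Fin d → ℝ := fun k => -x k with hgdef
  refine ⟨Tuple.sort g, ?_⟩
  have hm : Monotone (g ∘ Tuple.sort g) := Tuple.monotone_sort g
  have hinj : Function.Injective (g ∘ Tuple.sort g) := by
    refine Function.Injective.comp ?_ (Tuple.sort g).injective
    intro a b hab
    exact hx (by simpa [hgdef, neg_inj] using hab)
  have hsm : StrictMono (g ∘ Tuple.sort g) := hm.strictMono_of_injective hinj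
  intro a b hab
  have := hsm hab
  simp only [Function.comp, hgdef, neg_lt_neg_iff] at this
  exact this

lemma core_ineq {n : ℕ} {y cc pp : ℝ} (hy : 0 < y) (hy2 : y < 2 / n)
    (hcc : 0 ≤ cc) (hpp : 0 ≤ pp) :
    (n : ℝ≥0∞) ^ 2 * ENNReal.ofReal (cc * pp) ≤
      4 * ENNReal.ofReal (cc * y ^ (-2 : ℤ) * pp) := by
  have hn0 : (n : ℝ) ≠ 0 := by
    intro h
    rw [h] at hy2
    norm_num at hy2
    linarith
  have hnpos : 0 < (n : ℝ) := lt_of_le_of_ne (Nat.cast_nonneg n) (Ne.symm hn0)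
  have hmul : y * n < 2 := (lt_div_iff₀ hnpos).mp hy2
  have hsq : (n : ℝ) ^ 2 * y ^ 2 ≤ 4 := by nlinarith [mul_nonneg hy.le hnpos.le]
  have hz : y ^ (-2 : ℤ) = (y ^ 2)⁻¹ := by
    rw [zpow_neg]
    norm_cast
  have hreal : (n : ℝ) ^ 2 * (cc * pp) ≤ 4 * (cc * y ^ (-2 : ℤ) * pp) := by
    rw [hz]
    have h4 : (n : ℝ) ^ 2 ≤ 4 * (y ^ 2)⁻¹ := by
      rw [← div_eq_mul_inv, le_div_iff₀ (by positivity)]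
      exact hsq
    calc (n : ℝ) ^ 2 * (cc * pp) ≤ (4 * (y ^ 2)⁻¹) * (cc * pp) :=
          mul_le_mul_of_nonneg_right h4 (by positivity)
      _ = 4 * (cc * (y ^ 2)⁻¹ * pp) := by ring
  calc (n : ℝ≥0∞) ^ 2 * ENNReal.ofReal (cc * pp)
      = ENNReal.ofReal ((n : ℝ) ^ 2) * ENNReal.ofReal (cc * pp) := by
        rw [ENNReal.ofReal_pow (Nat.cast_nonneg n), ENNReal.ofReal_natCast]
    _ = ENNReal.ofReal ((n : ℝ) ^ 2 * (cc * pp)) := by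
        rw [← ENNReal.ofReal_mul (by positivity)]
    _ ≤ ENNReal.ofReal (4 * (cc * y ^ (-2 : ℤ) * pp)) := ENNReal.ofReal_le_ofReal hreal
    _ = 4 * ENNReal.ofReal (cc * y ^ (-2 : ℤ) * pp) := by
        rw [ENNReal.ofReal_mul (by norm_num)]
        norm_num

lemma pointwise_bound {d : ℕ} (hd : 2 ≤ d)
    (c : (Fin d → ℝ) → Matrix (Fin d) (Fin d) ℝ) (p : (Fin d → ℝ) → ℝ)
    (hc_diag : ∀ x ∈ simplex d, ∀ i, 0 ≤ c x i i)
    (hp_nonneg : ∀ x ∈ simplex d, 0 ≤ p x) (n : ℕ) (x : Fin d → ℝ)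
    (hxinj : Function.Injective x) :
    ∑ l : Fin d,
        Set.indicator {y ∈ simplex d |
            (∀ m, m ≠ l → y l < y m) ∧ 1 / (n : ℝ) < y l ∧ y l < 2 / (n : ℝ)}
          (fun y => (n : ℝ≥0∞) ^ 2 * ENNReal.ofReal (c y l l * p y)) x ≤
      ∑ τ : Equiv.Perm (Fin d),
        Set.indicator (simplexCell τ ∩ {y | y (τ ⟨d - 1, Nat.sub_lt (by omega) Nat.one_pos⟩) < 2 / (n : ℝ)})
          (fun y => 4 * ENNReal.ofReal
            (c y (τ ⟨d - 1, Nat.sub_lt (by omega) Nat.one_pos⟩) (τ ⟨d - 1, Nat.sub_lt (by omega) Nat.one_pos⟩) *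
              (y (τ ⟨d - 1, Nat.sub_lt (by omega) Nat.one_pos⟩)) ^ (-2 : ℤ) * p y)) x := by
  classical
  set td : Fin d := ⟨d - 1, by omega⟩ with htddef
  set A : Fin d → Set (Fin d → ℝ) := fun l => {y ∈ simplex d |
      (∀ m, m ≠ l → y l < y m) ∧ 1 / (n : ℝ) < y l ∧ y l < 2 / (n : ℝ)} with hAdef
  by_cases hex : ∃ l, x ∈ A l
  · obtain ⟨l₀, hl₀⟩ := hex
    have hxs : x ∈ simplex d := hl₀.1
    have hsum : ∑ l : Fin d,
        Set.indicator (A l) (fun y => (n : ℝ≥0∞) ^ 2 * ENNReal.ofReal (c y l l * p y)) x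
        = (n : ℝ≥0∞) ^ 2 * ENNReal.ofReal (c x l₀ l₀ * p x) := by
      rw [Finset.sum_eq_single l₀]
      · rw [Set.indicator_of_mem hl₀]
      · intro b _ hb
        have hnb : x ∉ A b := by
          intro hbmem
          have h1 := hbmem.2.1 l₀ (by simpa using hb.symm)
          have h2 := hl₀.2.1 b (by simpa using hb)
          linarith
        rw [Set.indicator_of_notMem hnb]
      · intro h
        exact absurd (Finset.mem_univ l₀) h
    rw [hsum]
    obtain ⟨τ, hτ⟩ := exists_perm_strictAnti hxinj
    have hmin : ∀ m, x (τ td) ≤ x m := by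
      intro m
      obtain ⟨k, rfl⟩ : ∃ k, m = τ k := ⟨τ.symm m, (τ.apply_symm_apply m).symm⟩
      have hk : k ≤ td := by
        have := k.isLt
        rw [htddef, Fin.le_def]
        simp only []
        omega
      rcases eq_or_lt_of_le hk with h | h
      · rw [h]
      · exact (hτ h).le
    have htd : τ td = l₀ := by
      by_contra hne
      have h1 := hl₀.2.1 (τ td) hne
      exact absurd (hmin l₀) (not_le.2 h1)
    have hxB : x ∈ simplexCell τ ∩ {y | y (τ td) < 2 / (n : ℝ)} :=
      ⟨⟨hxs, hτ⟩, by rw [htd]; exact hl₀.2.2.2⟩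
    calc (n : ℝ≥0∞) ^ 2 * ENNReal.ofReal (c x l₀ l₀ * p x)
        ≤ Set.indicator (simplexCell τ ∩ {y | y (τ td) < 2 / (n : ℝ)})
            (fun y => 4 * ENNReal.ofReal
              (c y (τ td) (τ td) * (y (τ td)) ^ (-2 : ℤ) * p y)) x := by
          rw [Set.indicator_of_mem hxB, htd]
          exact core_ineq (hxs.1 l₀).1 hl₀.2.2.2 (hc_diag x hxs l₀) (hp_nonneg x hxs)
      _ ≤ ∑ τ : Equiv.Perm (Fin d),
          Set.indicator (simplexCell τ ∩ {y | y (τ td) < 2 / (n : ℝ)})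
            (fun y => 4 * ENNReal.ofReal
              (c y (τ td) (τ td) * (y (τ td)) ^ (-2 : ℤ) * p y)) x :=
          Finset.single_le_sum
            (f := fun σ : Equiv.Perm (Fin d) =>
              Set.indicator (simplexCell σ ∩ {y | y (σ td) < 2 / (n : ℝ)})
                (fun y => 4 * ENNReal.ofReal
                  (c y (σ td) (σ td) * (y (σ td)) ^ (-2 : ℤ) * p y)) x)
            (fun _ _ => zero_le) (Finset.mem_univ τ)
  · push_neg at hex
    have : ∀ l : Fin d,
        Set.indicator (A l) (fun y => (n : ℝ≥0∞) ^ 2 * ENNReal.ofReal (c y l l * p y)) x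
        = 0 := fun l => Set.indicator_of_notMem (hex l) _
    exact (Finset.sum_eq_zero fun l _ => this l).le.trans zero_le
lemma tie_null {d : ℕ} (hd : 2 ≤ d) (i j : Fin d) (hij : i ≠ j) :
    μH[(d:ℝ)-1] {x : Fin d → ℝ | x i = x j ∧ ∑ l, x l = 1} = 0 := by
  classical
  set L : (Fin d → ℝ) →ₗ[ℝ] ℝ × ℝ :=
    LinearMap.prod ((LinearMap.proj i : (Fin d → ℝ) →ₗ[ℝ] ℝ) - LinearMap.proj j) (∑ l, (LinearMap.proj l : (Fin d → ℝ) →ₗ[ℝ] ℝ)) with hL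
  have hLapp : ∀ x : Fin d → ℝ, L x = (x i - x j, ∑ l, x l) := by
    intro x
    simp [hL, LinearMap.proj, Fintype.sum_apply]
  have hsurj : Function.Surjective L := by
    rintro ⟨a, b⟩
    set v : Fin d → ℝ := (a/2) • (Pi.single i (1:ℝ) - Pi.single j 1) + b • (fun _ => (d : ℝ)⁻¹)
      with hv
    refine ⟨v, ?_⟩
    have hd0 : (d : ℝ) ≠ 0 := by positivity
    rw [hLapp]
    have h1 : ∑ l, v l = b := by
      simp [hv, Finset.sum_add_distrib, Finset.sum_sub_distrib, Finset.sum_pi_single',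
        mul_comm, hd0, ← Finset.mul_sum]
      field_simp
    have h2 : v i - v j = a := by
      simp [hv, Pi.single_apply, hij, hij.symm]
      try ring
    rw [h1, h2]
  have hfr : Module.finrank ℝ (LinearMap.ker L) = d - 2 := by
    have := LinearMap.finrank_range_add_finrank_ker L
    rw [LinearMap.range_eq_top.2 hsurj] at this
    rw [finrank_top, Module.finrank_prod, Module.finrank_self, Module.finrank_fin_fun] at this
    omega
  -- parametrize the affine subspace by the kernel
  set x₀ : Fin d → ℝ := fun _ => (d : ℝ)⁻¹ with hx₀
  have hd0 : (d : ℝ) ≠ 0 := by positivity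
  set f : LinearMap.ker L → (Fin d → ℝ) := fun v => x₀ + (v : Fin d → ℝ) with hf
  have hsub : {x : Fin d → ℝ | x i = x j ∧ ∑ l, x l = 1} ⊆ Set.range f := by
    intro x hx
    have hmem : x - x₀ ∈ LinearMap.ker L := by
      rw [LinearMap.mem_ker, hLapp]
      have : ∑ l, (x - x₀) l = 0 := by
        have hs : ∑ l, (x - x₀) l = (∑ l, x l) - ∑ l, x₀ l := Finset.sum_sub_distrib x x₀
        rw [hs, hx.2]
        simp [hx₀, hd0]
      rw [Prod.mk_eq_zero]
      exact ⟨by simp [hx₀, hx.1], this⟩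
    exact ⟨⟨x - x₀, hmem⟩, by simp [hf]⟩
  have hdim : dimH {x : Fin d → ℝ | x i = x j ∧ ∑ l, x l = 1} ≤ (d - 2 : ℕ) := by
    refine (dimH_mono hsub).trans ?_
    have hcd : ContDiff ℝ 1 f := by
      have : ContDiff ℝ 1 fun v : LinearMap.ker L => ((LinearMap.ker L).subtypeL v :
          Fin d → ℝ) := (LinearMap.ker L).subtypeL.contDiff
      exact contDiff_const.add this
    simpa [hfr] using hcd.dimH_range_le
  have hlt : dimH {x : Fin d → ℝ | x i = x j ∧ ∑ l, x l = 1} < ((d - 1 : ℕ) : ℝ≥0) := by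
    refine hdim.trans_lt ?_
    norm_cast
    omega
  have h0 : μH[((d - 1 : ℕ) : ℝ≥0)] {x : Fin d → ℝ | x i = x j ∧ ∑ l, x l = 1} = 0 :=
    hausdorffMeasure_of_dimH_lt hlt
  have hexp : ((d : ℝ) - 1) = (((d - 1 : ℕ) : ℝ≥0) : ℝ) := by
    have h1 : (((d - 1 : ℕ) : ℝ≥0) : ℝ) = ((d - 1 : ℕ) : ℝ) := by norm_cast
    rw [h1, Nat.cast_sub (by omega : 1 ≤ d), Nat.cast_one]
  rw [hexp]
  exact h0

/-- **Core estimate in the proof of Proposition 6.1:** under the integrability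
condition (6.1) on `(c, p)` with respect to the `(d−1)`-dimensional Hausdorff
measure `ς` on the simplex, `n² ∫_{{1/n < min_l x_l < 2/n, unique min}}
c_{i(x)i(x)} p dς → 0`.  The region of a unique minimum at index `l` is
`{x : x_l < x_m ∀ m ≠ l}`, and the integral over the unique-minimum region is
written as the sum over `l` of the integrals over these disjoint pieces. -/
theorem stmt_12 {d : ℕ} (hd : 2 ≤ d)
    (c : (Fin d → ℝ) → Matrix (Fin d) (Fin d) ℝ) (p : (Fin d → ℝ) → ℝ)
    (hc_meas : ∀ i j, Measurable fun x => c x i j)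
    (hc_symm : ∀ x ∈ simplex d, (c x).IsSymm)
    (hc_diag : ∀ x ∈ simplex d, ∀ i, 0 ≤ c x i i)
    (hp_meas : Measurable p) (hp_nonneg : ∀ x ∈ simplex d, 0 ≤ p x)
    (hint : ∀ τ : Equiv.Perm (Fin d),
      ∫⁻ x in simplexCell τ,
          ENNReal.ofReal
            (c x (τ ⟨d - 1, by omega⟩) (τ ⟨d - 1, by omega⟩) *
              (x (τ ⟨d - 1, by omega⟩)) ^ (-2 : ℤ) * p x)
          ∂((μH[(d : ℝ) - 1]).restrict (simplex d)) < ⊤) :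
    Tendsto (fun n : ℕ => (n : ℝ≥0∞) ^ 2 *
        ∑ l : Fin d,
          ∫⁻ x in {x ∈ simplex d |
              (∀ m, m ≠ l → x l < x m) ∧ 1 / (n : ℝ) < x l ∧ x l < 2 / (n : ℝ)},
            ENNReal.ofReal (c x l l * p x)
            ∂((μH[(d : ℝ) - 1]).restrict (simplex d)))
      atTop (nhds 0) := by
  classical
  set ν := (μH[(d : ℝ) - 1]).restrict (simplex d) with hν
  have htdlt : d - 1 < d := by omega
  set td : Fin d := ⟨d - 1, htdlt⟩ with htddef
  -- a.e. every point is injective (no ties)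
  have haeinj : ∀ᵐ x ∂ν, Function.Injective x := by
    rw [ae_iff, hν, Measure.restrict_apply' (measurableSet_simplex d)]
    have hsub : {x : Fin d → ℝ | ¬Function.Injective x} ∩ simplex d ⊆
        ⋃ (i : Fin d) (j : Fin d),
          (if i = j then (∅ : Set (Fin d → ℝ)) else {x | x i = x j ∧ ∑ l, x l = 1}) := by
      rintro x ⟨hxni, hxs⟩
      rw [Set.mem_setOf_eq, Function.not_injective_iff] at hxni
      obtain ⟨i, j, hij, hne⟩ := hxni
      refine Set.mem_iUnion.2 ⟨i, Set.mem_iUnion.2 ⟨j, ?_⟩⟩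
      rw [if_neg hne]
      exact ⟨hij, hxs.2⟩
    refine measure_mono_null hsub ?_
    refine measure_iUnion_null fun i => measure_iUnion_null fun j => ?_
    by_cases h : i = j
    · simp [h]
    · rw [if_neg h]
      exact tie_null hd i j h
  -- measurable integrands for the cells
  have hgm : ∀ τ : Equiv.Perm (Fin d), Measurable fun y : Fin d → ℝ =>
      4 * ENNReal.ofReal (c y (τ td) (τ td) * (y (τ td)) ^ (-2 : ℤ) * p y) := by
    intro τ
    have hz : Measurable fun y : Fin d → ℝ => (y (τ td)) ^ (-2 : ℤ) := by
      have heq : (fun y : Fin d → ℝ => (y (τ td)) ^ (-2 : ℤ)) =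
          fun y => ((y (τ td)) ^ 2)⁻¹ := by
        funext y
        rw [zpow_neg]
        norm_cast
      rw [heq]
      exact ((measurable_pi_apply _).pow_const 2).inv
    exact measurable_const.mul ((((hc_meas _ _).mul hz).mul hp_meas).ennreal_ofReal)
  have hBmeas : ∀ (n : ℕ) (τ : Equiv.Perm (Fin d)),
      MeasurableSet (simplexCell τ ∩ {y : Fin d → ℝ | y (τ td) < 2 / (n : ℝ)}) :=
    fun n τ => (measurableSet_cell τ).inter
      (measurableSet_lt (measurable_pi_apply _) measurable_const)
  -- the key domination bound
  have key : ∀ n : ℕ, (n : ℝ≥0∞) ^ 2 *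
      ∑ l : Fin d, ∫⁻ x in {x ∈ simplex d |
          (∀ m, m ≠ l → x l < x m) ∧ 1 / (n : ℝ) < x l ∧ x l < 2 / (n : ℝ)},
        ENNReal.ofReal (c x l l * p x) ∂ν ≤
      ∑ τ : Equiv.Perm (Fin d), ∫⁻ x,
        Set.indicator (simplexCell τ ∩ {y | y (τ td) < 2 / (n : ℝ)})
          (fun y => 4 * ENNReal.ofReal
            (c y (τ td) (τ td) * (y (τ td)) ^ (-2 : ℤ) * p y)) x ∂ν := by
    intro n
    have hAmeasfun : ∀ l : Fin d, Measurable fun x : Fin d → ℝ =>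
        Set.indicator {y ∈ simplex d |
            (∀ m, m ≠ l → y l < y m) ∧ 1 / (n : ℝ) < y l ∧ y l < 2 / (n : ℝ)}
          (fun y => (n : ℝ≥0∞) ^ 2 * ENNReal.ofReal (c y l l * p y)) x :=
      fun l => (measurable_const.mul ((hc_meas l l).mul hp_meas).ennreal_ofReal).indicator
        (measurableSet_region n l)
    calc (n : ℝ≥0∞) ^ 2 * ∑ l : Fin d, ∫⁻ x in {x ∈ simplex d |
            (∀ m, m ≠ l → x l < x m) ∧ 1 / (n : ℝ) < x l ∧ x l < 2 / (n : ℝ)},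
          ENNReal.ofReal (c x l l * p x) ∂ν
        = ∑ l : Fin d, ∫⁻ x, Set.indicator {y ∈ simplex d |
            (∀ m, m ≠ l → y l < y m) ∧ 1 / (n : ℝ) < y l ∧ y l < 2 / (n : ℝ)}
            (fun y => (n : ℝ≥0∞) ^ 2 * ENNReal.ofReal (c y l l * p y)) x ∂ν := by
          rw [Finset.mul_sum]
          refine Finset.sum_congr rfl fun l _ => ?_
          rw [lintegral_indicator (measurableSet_region n l),
            lintegral_const_mul' _ _ (by simp : ((n : ℝ≥0∞) ^ 2) ≠ ⊤)]
      _ = ∫⁻ x, ∑ l : Fin d, Set.indicator {y ∈ simplex d |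
            (∀ m, m ≠ l → y l < y m) ∧ 1 / (n : ℝ) < y l ∧ y l < 2 / (n : ℝ)}
            (fun y => (n : ℝ≥0∞) ^ 2 * ENNReal.ofReal (c y l l * p y)) x ∂ν :=
          (lintegral_finset_sum _ fun l _ => hAmeasfun l).symm
      _ ≤ ∫⁻ x, ∑ τ : Equiv.Perm (Fin d),
            Set.indicator (simplexCell τ ∩ {y | y (τ td) < 2 / (n : ℝ)})
              (fun y => 4 * ENNReal.ofReal
                (c y (τ td) (τ td) * (y (τ td)) ^ (-2 : ℤ) * p y)) x ∂ν := by
          refine lintegral_mono_ae (haeinj.mono fun x hx => ?_)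
          exact pointwise_bound hd c p hc_diag hp_nonneg n x hx
      _ = ∑ τ : Equiv.Perm (Fin d), ∫⁻ x,
            Set.indicator (simplexCell τ ∩ {y | y (τ td) < 2 / (n : ℝ)})
              (fun y => 4 * ENNReal.ofReal
                (c y (τ td) (τ td) * (y (τ td)) ^ (-2 : ℤ) * p y)) x ∂ν :=
          lintegral_finset_sum _ fun τ _ => (hgm τ).indicator (hBmeas n τ)
  -- the dominating sums tend to zero
  have tendR : Tendsto (fun n : ℕ => ∑ τ : Equiv.Perm (Fin d), ∫⁻ x,
      Set.indicator (simplexCell τ ∩ {y | y (τ td) < 2 / (n : ℝ)})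
        (fun y => 4 * ENNReal.ofReal
          (c y (τ td) (τ td) * (y (τ td)) ^ (-2 : ℤ) * p y)) x ∂ν)
      atTop (nhds 0) := by
    have h0 : (0 : ℝ≥0∞) = ∑ _τ : Equiv.Perm (Fin d), (0 : ℝ≥0∞) := by simp
    rw [h0]
    refine tendsto_finset_sum _ fun τ _ => ?_
    have hdc := tendsto_lintegral_of_dominated_convergence (μ := ν)
      (F := fun n x => Set.indicator (simplexCell τ ∩ {y | y (τ td) < 2 / (n : ℝ)})
        (fun y => 4 * ENNReal.ofReal
          (c y (τ td) (τ td) * (y (τ td)) ^ (-2 : ℤ) * p y)) x)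
      (f := fun _ => 0)
      (bound := Set.indicator (simplexCell τ)
        (fun y => 4 * ENNReal.ofReal
          (c y (τ td) (τ td) * (y (τ td)) ^ (-2 : ℤ) * p y)))
      (fun n => (hgm τ).indicator (hBmeas n τ))
      (fun n => Filter.Eventually.of_forall fun x =>
        Set.indicator_le_indicator_of_subset Set.inter_subset_left (fun _ => zero_le) x)
      ?_ ?_
    · simpa using hdc
    · -- finiteness of the dominating integral
      rw [lintegral_indicator (measurableSet_cell τ),
        lintegral_const_mul' _ _ (by norm_num : (4 : ℝ≥0∞) ≠ ⊤)]
      exact ENNReal.mul_ne_top (by norm_num) (hint τ).ne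
    · -- pointwise convergence to 0
      refine Filter.Eventually.of_forall fun x => ?_
      by_cases hx : x ∈ simplexCell τ
      · have hx0 : 0 < x (τ td) := (hx.1.1 (τ td)).1
        have ht : Tendsto (fun n : ℕ => 2 / (n : ℝ)) atTop (nhds 0) :=
          tendsto_const_div_atTop_nhds_zero_nat 2
        have hev : ∀ᶠ n : ℕ in atTop,
            Set.indicator (simplexCell τ ∩ {y | y (τ td) < 2 / (n : ℝ)})
              (fun y => 4 * ENNReal.ofReal
                (c y (τ td) (τ td) * (y (τ td)) ^ (-2 : ℤ) * p y)) x = 0 := by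
          filter_upwards [ht.eventually_lt_const hx0] with n hn
          refine Set.indicator_of_notMem (fun hmem => ?_) _
          exact absurd hmem.2 (not_lt.2 hn.le)
        exact Tendsto.congr' (hev.mono fun n hn => hn.symm) tendsto_const_nhds
      · have hz : ∀ n : ℕ, Set.indicator (simplexCell τ ∩ {y | y (τ td) < 2 / (n : ℝ)})
            (fun y => 4 * ENNReal.ofReal
              (c y (τ td) (τ td) * (y (τ td)) ^ (-2 : ℤ) * p y)) x = 0 :=
          fun n => Set.indicator_of_notMem (fun hmem => hx hmem.1) _
        exact Tendsto.congr (fun n => (hz n).symm) tendsto_const_nhds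
  exact tendsto_of_tendsto_of_tendsto_of_le_of_le tendsto_const_nhds tendR
    (fun n => zero_le) key
end

section
/- Let d ≥ 2, β ≥ 0, σ² > 0, and γ, g ∈ ℝ^d. For a permutation τ of {1,…,d} define p_τ : (0,∞)^d → (0,∞) by p_τ(x) := ‖x‖_{2β}^{2(1+(d−1)β) − d} · Π_{k=1}^d x_{τ(k)}^{ 2(γ_{τ(k)} + g_k)/σ² + 2β − 1 }, where ‖x‖_r := (Σ_{i=1}^d x_i^r)^{1/r} for r ≠ 0 and ‖x‖_0 := 1. If x ∈ (0,∞)^d and τ, τ' are two permutations such that both x_{τ(1)} ≥ x_{τ(2)} ≥ … ≥ x_{τ(d)} and x_{τ'(1)} ≥ x_{τ'(2)} ≥ … ≥ x_{τ'(d)}, then p_τ(x) = p_τ'(x). -/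
/-- The `r`-"norm" `‖x‖_r = (Σ_i x_i^r)^{1/r}` for `r ≠ 0`, with the
convention `‖x‖_0 = 1`. -/
noncomputable def pnorm {d : ℕ} (r : ℝ) (x : Fin d → ℝ) : ℝ :=
  if r = 0 then 1 else (∑ i, x i ^ r) ^ (1 / r)

/-- **Consistency of the piecewise density of the hybrid Atlas /
generalized volatility-stabilized model (Example 6.3, formula (6.4)):** the
functions `p_τ(x) = ‖x‖_{2β}^{2(1+(d−1)β)−d} Π_k x_{τ(k)}^{2(γ_{τ(k)}+g_k)/σ² + 2β − 1}`
agree at every point `x ∈ (0,∞)^d` that is weakly ordered by both `τ` and `τ'`. -/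
theorem stmt_15 {d : ℕ} (hd : 2 ≤ d) (β : ℝ) (hβ : 0 ≤ β)
    (σsq : ℝ) (hσ : 0 < σsq) (γ g : Fin d → ℝ)
    (pτ : Equiv.Perm (Fin d) → (Fin d → ℝ) → ℝ)
    (hpτ : ∀ τ x, pτ τ x =
      pnorm (2 * β) x ^ (2 * (1 + ((d : ℝ) - 1) * β) - (d : ℝ)) *
        ∏ k, x (τ k) ^ (2 * (γ (τ k) + g k) / σsq + 2 * β - 1))
    (x : Fin d → ℝ) (hx : ∀ i, 0 < x i)
    (τ τ' : Equiv.Perm (Fin d))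
    (hτ : Antitone fun k => x (τ k)) (hτ' : Antitone fun k => x (τ' k)) :
    pτ τ x = pτ τ' x := by
  have key : ((OrderDual.toDual ∘ x) ∘ τ) = ((OrderDual.toDual ∘ x) ∘ τ') :=
    Tuple.unique_monotone hτ.dual_right hτ'.dual_right
  have hx' : ∀ k, x (τ k) = x (τ' k) := fun k =>
    congrArg OrderDual.ofDual (congrFun key k)
  rw [hpτ, hpτ]
  congr 1
  have split : ∀ (σ : Equiv.Perm (Fin d)),
      (∏ k, x (σ k) ^ (2 * (γ (σ k) + g k) / σsq + 2 * β - 1)) =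
      (∏ i, x i ^ (2 * γ i / σsq + 2 * β - 1)) *
        ∏ k, x (σ k) ^ (2 * g k / σsq) := by
    intro σ
    rw [← Equiv.prod_comp σ (fun i => x i ^ (2 * γ i / σsq + 2 * β - 1)),
      ← Finset.prod_mul_distrib]
    refine Finset.prod_congr rfl fun k _ => ?_
    rw [← Real.rpow_add (hx (σ k))]
    ring_nf
  rw [split τ, split τ']
  congr 1
  exact Finset.prod_congr rfl fun k _ => by rw [hx' k]
end
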